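/- arXiv:2005.09402 — 6 statements merged into one kernel-verified Lean document; each statement's English description precedes it below -/
import Mathlib

section
/- Let q be a prime power, n ≥ 1, and let α ∈ F_q (viewed inside F_{q^n}). Then the number of pairs (x,y) ∈ F_{q^n} × F_{q^n} satisfying x·(y^q − y) = α·x² − 1 equals q times the number of nonzero x ∈ F_{q^n} satisfying Tr(α·x − x⁻¹) = 0, where Tr denotes the field trace from F_{q^n} to F_q. (Equivalently, the projective curve x(y^q − y) = αx² − 1 has exactly two F_{q^n}-rational points at infinity, so its number of F_{q^n}-rational points is q·Z − q + 2, with Z the number of x ∈ F_{q^n} satisfying α·Tr(x) − Tr(x⁻¹) = 0 under the convention 0⁻¹ = 0.) -/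
open Finset

private lemma cardsplit {G H : Type} [AddCommGroup G] [AddCommGroup H] (f : G →+ H) [Finite G] :
    Nat.card G = Nat.card f.range * Nat.card f.ker := by
  rw [← Nat.card_congr (QuotientAddGroup.quotientKerEquivRange f).toEquiv]
  exact AddSubgroup.card_eq_card_quotient_mul_card_addSubgroup f.ker

section key

variable {q n : ℕ} {Fq K : Type} [Field Fq] [Fintype Fq] [Field K] [Fintype K] [Algebra Fq K]

open scoped Classical in
private lemma count_AS (hq : IsPrimePow q) (hn : 1 ≤ n) (hFq : Fintype.card Fq = q)
    (hK : Module.finrank Fq K = n) (c : K) :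
    Nat.card {y : K // y ^ q - y = c} = if Algebra.trace Fq K c = 0 then q else 0 := by
  classical
  obtain ⟨p, k, hp0, hk, hpk⟩ := hq
  have hp : p.Prime := hp0.nat_prime
  haveI : Fact p.Prime := ⟨hp⟩
  have hq2 : 2 ≤ q := by
    rw [← hpk]; calc 2 ≤ p := hp.two_le
    _ ≤ p ^ k := Nat.le_self_pow hk.ne' p
  have hcardK : Fintype.card K = q ^ n := by
    rw [← hFq, ← hK]; exact Module.card_eq_pow_finrank
  -- char K = p
  haveI : CharP K p := by
    obtain ⟨m, hrp, hrm⟩ := FiniteField.card K (ringChar K)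
    have hdvd : p ∣ ringChar K ^ (m : ℕ) := by
      rw [← hrm, hcardK, ← hpk, ← pow_mul]
      exact dvd_pow_self p (by positivity)
    have : p = ringChar K := ((Nat.prime_dvd_prime_iff_eq hp hrp).mp
      (hp.dvd_of_dvd_pow hdvd))
    rw [this]; infer_instance
  have hinj : Function.Injective (algebraMap Fq K) := (algebraMap Fq K).injective
  -- the Artin-Schreier additive map
  have hadd : ∀ x y : K, (x + y) ^ q = x ^ q + y ^ q := by
    intro x y; rw [← hpk]; exact add_pow_char_pow ..
  let f : K →+ K :=
    { toFun := fun y => y ^ q - y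
      map_zero' := by simp [zero_pow (by omega : q ≠ 0)]
      map_add' := fun x y => by simp only [hadd]; ring }
  -- kernel of f has cardinality q
  have hkerf : Nat.card f.ker = q := by
    have hdeg : (Polynomial.X ^ q - Polynomial.X : Polynomial K).natDegree = q := by
      rw [Polynomial.natDegree_sub_eq_left_of_natDegree_lt, Polynomial.natDegree_X_pow]
      rw [Polynomial.natDegree_X_pow, Polynomial.natDegree_X]; omega
    have hP0 : (Polynomial.X ^ q - Polynomial.X : Polynomial K) ≠ 0 := by
      intro h; rw [h, Polynomial.natDegree_zero] at hdeg; omega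
    have hroots : ∀ y : K, y ∈ f.ker →
        y ∈ (Polynomial.X ^ q - Polynomial.X : Polynomial K).roots.toFinset := by
      intro y hy
      have hy' : y ^ q - y = 0 := hy
      rw [Multiset.mem_toFinset, Polynomial.mem_roots hP0]
      simp [Polynomial.IsRoot, hy']
    have hle : Nat.card f.ker ≤ q := by
      have hsub : (f.ker : Set K) ⊆
          ((Polynomial.X ^ q - Polynomial.X : Polynomial K).roots.toFinset : Set K) :=
        fun y hy => hroots y hy
      have h1 : Nat.card ((f.ker : Set K) : Type) ≤ q := by
        rw [Nat.card_coe_set_eq]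
        refine (Set.ncard_le_ncard hsub (Finset.finite_toSet _)).trans ?_
        rw [Set.ncard_coe_finset]
        calc (Polynomial.X ^ q - Polynomial.X : Polynomial K).roots.toFinset.card
            ≤ Multiset.card (Polynomial.X ^ q - Polynomial.X : Polynomial K).roots :=
              Multiset.toFinset_card_le _
          _ ≤ (Polynomial.X ^ q - Polynomial.X : Polynomial K).natDegree :=
              Polynomial.card_roots' _
          _ = q := hdeg
      exact h1
    have hge : q ≤ Nat.card f.ker := by
      rw [← hFq, Nat.card_eq_fintype_card]
      have hmem : ∀ a : Fq, algebraMap Fq K a ∈ f.ker := by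
        intro a
        show (algebraMap Fq K a) ^ q - algebraMap Fq K a = 0
        rw [← map_pow, ← hFq, FiniteField.pow_card, sub_self]
      have : Function.Injective (fun a : Fq => (⟨algebraMap Fq K a, hmem a⟩ : f.ker)) := by
        intro a b hab
        exact hinj (congrArg Subtype.val hab)
      exact Fintype.card_le_of_injective _ this
    omega
  -- trace is invariant under frobenius
  have htrfrob : ∀ y : K, Algebra.trace Fq K (y ^ q) = Algebra.trace Fq K y := by
    intro y
    let F : K →ₐ[Fq] K :=
      { toRingHom := iterateFrobenius K p k
        commutes' := fun a => by
          show iterateFrobenius K p k (algebraMap Fq K a) = algebraMap Fq K a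
          rw [iterateFrobenius_def, hpk, ← map_pow, ← hFq, FiniteField.pow_card] }
    let σ : K ≃ₐ[Fq] K := AlgEquiv.ofBijective F
      ((Finite.injective_iff_bijective).mp (F.toRingHom.injective))
    have hσ : σ y = y ^ q := by
      show iterateFrobenius K p k y = y ^ q
      rw [iterateFrobenius_def, hpk]
    calc Algebra.trace Fq K (y ^ q) = Algebra.trace Fq K (σ y) := by rw [hσ]
      _ = Algebra.trace Fq K y := Algebra.trace_eq_of_algEquiv σ y
  -- range f = kernel of trace
  set T : K →+ Fq := (Algebra.trace Fq K).toAddMonoidHom with hT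
  have hTsurj : Function.Surjective T := Algebra.trace_surjective Fq K
  have hles : (f.range : Set K) ⊆ (T.ker : Set K) := by
    rintro _ ⟨y, rfl⟩
    show Algebra.trace Fq K (y ^ q - y) = 0
    rw [map_sub, htrfrob, sub_self]
  have hcards : Nat.card f.range = Nat.card T.ker := by
    have h1 := cardsplit f
    have h2 := cardsplit T
    have h3 : Nat.card T.range = q := by
      rw [(AddMonoidHom.range_eq_top).mpr hTsurj,
        Nat.card_congr AddSubgroup.topEquiv.toEquiv, Nat.card_eq_fintype_card, hFq]
    rw [hkerf] at h1; rw [h3] at h2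
    have hqpos : 0 < q := by omega
    apply Nat.eq_of_mul_eq_mul_left hqpos
    calc q * Nat.card f.range = Nat.card K := by rw [mul_comm, ← h1]
      _ = q * Nat.card T.ker := h2
  have hrange : (f.range : Set K) = (T.ker : Set K) := by
    apply Set.eq_of_subset_of_ncard_le hles
    rw [← Nat.card_coe_set_eq, ← Nat.card_coe_set_eq]
    simp only [SetLike.coe_sort_coe]
    omega
  -- final count
  by_cases htr : Algebra.trace Fq K c = 0
  · rw [if_pos htr]
    have hc : c ∈ (f.range : Set K) := by rw [hrange]; exact htr
    obtain ⟨y₀, hy₀⟩ := hc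
    refine (Nat.card_congr ?_).trans hkerf
    refine ⟨fun y => ⟨y.1 - y₀, ?_⟩, fun z => ⟨z.1 + y₀, ?_⟩, ?_, ?_⟩
    · show f (y.1 - y₀) = 0
      rw [map_sub f]
      have h1 : f y.1 = c := y.2
      rw [h1, hy₀, sub_self]
    · have hz : f z.1 = 0 := z.2
      show f (z.1 + y₀) = c
      rw [map_add f, hz, hy₀, zero_add]
    · intro y; ext; simp
    · intro z; ext; simp
  · rw [if_neg htr]
    rw [Nat.card_eq_zero]
    left
    rw [isEmpty_subtype]
    intro y hy
    apply htr
    have hmem : c ∈ (f.range : Set K) := ⟨y, hy⟩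
    rw [hrange] at hmem
    exact hmem

end key

/-- Let `q` be a prime power, `n ≥ 1`, `Fq` a field with `q` elements and
`K` an extension of `Fq` of degree `n` (so `K` has `q ^ n` elements), and let `α ∈ Fq`.
The number of pairs `(x, y) ∈ K × K` with `x·(y^q − y) = α·x² − 1` equals `q` times the
number of nonzero `x ∈ K` with `Tr(α·x − x⁻¹) = 0`, where `Tr` is the field trace from
`K` to `Fq`. -/
theorem stmt3 (q n : ℕ) (hq : IsPrimePow q) (hn : 1 ≤ n)
    (Fq K : Type) [Field Fq] [Fintype Fq] [Field K] [Fintype K] [Algebra Fq K]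
    (hFq : Fintype.card Fq = q) (hK : Module.finrank Fq K = n) (α : Fq) :
    Nat.card {xy : K × K //
        xy.1 * (xy.2 ^ q - xy.2) = algebraMap Fq K α * xy.1 ^ 2 - 1} =
    q * Nat.card {x : K //
        x ≠ 0 ∧ Algebra.trace Fq K (algebraMap Fq K α * x - x⁻¹) = 0} := by
  classical
  set A := algebraMap Fq K α with hA
  have e1 : {xy : K × K // xy.1 * (xy.2 ^ q - xy.2) = A * xy.1 ^ 2 - 1} ≃
      Σ x : K, {y : K // x * (y ^ q - y) = A * x ^ 2 - 1} :=
    Equiv.subtypeProdEquivSigmaSubtype (fun (x y : K) => x * (y ^ q - y) = A * x ^ 2 - 1)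
  rw [Nat.card_congr e1, Nat.card_eq_fintype_card, Fintype.card_sigma]
  have step : ∀ x : K, Fintype.card {y : K // x * (y ^ q - y) = A * x ^ 2 - 1} =
      if x ≠ 0 ∧ Algebra.trace Fq K (A * x - x⁻¹) = 0 then q else 0 := by
    intro x
    by_cases hx : x = 0
    · subst hx
      simp only [ne_eq, not_true_eq_false, false_and, if_false]
      rw [Fintype.card_eq_zero_iff, isEmpty_subtype]
      intro y h
      rw [zero_mul, zero_pow two_ne_zero, mul_zero, zero_sub] at h
      exact one_ne_zero (neg_eq_zero.mp h.symm)
    · have key : A * x ^ 2 - 1 = x * (A * x - x⁻¹) := by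
        field_simp
      have hiff : ∀ y : K, (x * (y ^ q - y) = A * x ^ 2 - 1) ↔
          (y ^ q - y = A * x - x⁻¹) := by
        intro y; rw [key, mul_right_inj' hx]
      rw [← Nat.card_eq_fintype_card, Nat.card_congr (Equiv.subtypeEquivRight hiff),
        count_AS hq hn hFq hK (A * x - x⁻¹)]
      simp [hx]
  rw [Finset.sum_congr rfl (fun x _ => step x), ← Finset.sum_filter,
    Finset.sum_const, smul_eq_mul, Nat.card_eq_fintype_card, Fintype.card_subtype,
    mul_comm]
end

section
/- Let q = 2^r be an even prime power, n ≥ 1, and let α ∈ F_q be nonzero. Then the number of pairs (x,y) ∈ F_{q^n} × F_{q^n} satisfying x·(y^q + y) = α·x² + 1 equals the number of pairs (x,y) ∈ F_{q^n} × F_{q^n} satisfying x·(y^q + y) = x² + 1. -/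
/-- Let `q = 2 ^ r` be an even prime power, `n ≥ 1`, `Fq` a field with
`q` elements, `K` an extension of `Fq` of degree `n`, and `α ∈ Fq` nonzero.  Then the
number of pairs `(x, y) ∈ K × K` with `x·(y^q + y) = α·x² + 1` equals the number of pairs
`(x, y) ∈ K × K` with `x·(y^q + y) = x² + 1`. -/
theorem stmt4 (r q n : ℕ) (hr : 1 ≤ r) (hq : q = 2 ^ r) (hn : 1 ≤ n)
    (Fq K : Type) [Field Fq] [Fintype Fq] [Field K] [Fintype K] [Algebra Fq K]
    (hFq : Fintype.card Fq = q) (hK : Module.finrank Fq K = n)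
    (α : Fq) (hα : α ≠ 0) :
    Nat.card {xy : K × K //
        xy.1 * (xy.2 ^ q + xy.2) = algebraMap Fq K α * xy.1 ^ 2 + 1} =
    Nat.card {xy : K × K // xy.1 * (xy.2 ^ q + xy.2) = xy.1 ^ 2 + 1} := by
  -- characteristic 2
  have hchar2 : ringChar Fq = 2 := by
    have hp : (ringChar Fq).Prime := CharP.char_is_prime Fq (ringChar Fq)
    have hdvd : ringChar Fq ∣ q := by
      have := Nat.cast_card_eq_zero Fq
      rw [hFq] at this
      exact (CharP.cast_eq_zero_iff Fq (ringChar Fq) q).mp this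
    rw [hq] at hdvd
    have := hp.dvd_of_dvd_pow hdvd
    exact (Nat.prime_dvd_prime_iff_eq hp Nat.prime_two).mp this
  haveI : CharP Fq 2 := hchar2 ▸ ringChar.charP Fq
  -- squaring is surjective on Fq
  have hsq : ∀ a : Fq, ∃ b : Fq, b ^ 2 = a := by
    have h20 : (2 : Fq) = 0 := by exact_mod_cast CharP.cast_eq_zero Fq 2
    have hinj : Function.Injective (fun b : Fq => b ^ 2) := by
      intro a b hab
      simp only at hab
      have hsq0 : (a + b) ^ 2 = 0 := by linear_combination hab + (b ^ 2 + a * b) * h20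
      have hab0 : a + b = 0 := pow_eq_zero_iff (two_ne_zero) |>.mp hsq0
      linear_combination hab0 - b * h20
    intro a
    obtain ⟨b, hb⟩ := (Finite.injective_iff_surjective.mp hinj) a
    exact ⟨b, hb⟩
  obtain ⟨β, hβ⟩ := hsq α
  have hβ0 : β ≠ 0 := fun h => hα (by rw [← hβ, h]; ring)
  set b : K := algebraMap Fq K β with hb
  have hbK0 : b ≠ 0 := by simp only [hb, ne_eq, map_eq_zero]; exact hβ0
  -- b ^ q = b
  have hbq : b ^ q = b := by
    rw [hb, ← map_pow]
    congr 1
    rw [← hFq]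
    exact FiniteField.pow_card β
  have hb2 : b ^ 2 = algebraMap Fq K α := by rw [hb, ← map_pow, hβ]
  apply Nat.card_congr
  refine ⟨fun ⟨⟨x, y⟩, h⟩ => ⟨(b * x, y / b), ?_⟩,
          fun ⟨⟨x, y⟩, h⟩ => ⟨(x / b, b * y), ?_⟩, ?_, ?_⟩
  · simp only at h ⊢
    have : (y / b) ^ q + y / b = (y ^ q + y) / b := by
      rw [div_pow, hbq, ← add_div]
    rw [this]
    field_simp
    linear_combination h - x ^ 2 * hb2
  · simp only at h ⊢
    have : (b * y) ^ q + b * y = b * (y ^ q + y) := by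
      rw [mul_pow, hbq, mul_add]
    rw [this]
    field_simp
    linear_combination b ^ 2 * h + x ^ 2 * hb2
  · rintro ⟨⟨x, y⟩, h⟩
    simp only [Subtype.mk.injEq, Prod.mk.injEq]
    constructor
    · field_simp
    · field_simp
  · rintro ⟨⟨x, y⟩, h⟩
    simp only [Subtype.mk.injEq, Prod.mk.injEq]
    constructor
    · field_simp
    · field_simp
end

section
/- Let q = 2^r be an even prime power and n ≥ 1. Let N denote the number of pairs (x,y) ∈ F_{q^n} × F_{q^n} satisfying x·(y^q + y) = x² + 1, and for each nonzero α ∈ F_q let N_α denote the number of pairs (x,y) ∈ F_{q^n} × F_{q^n} satisfying x·(y² + y) = α·(x² + 1). Then N − q^n + 1 = ∑_{α ∈ F_q, α ≠ 0} (N_α − q^n + 1). (This is the affine form of the statement that the curve x(y^q+y)=x²+1 over F_q is the fiber product of the curves C_α : x(y²+y)=α(x²+1), each projective curve having exactly two points at infinity, so that #C(F_{q^n}) − (q^n+1) = ∑_{α∈F_q^×} (#C_α(F_{q^n}) − (q^n+1)).) -/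
open Finset

open scoped Classical

-- fiber count of an additive hom
lemma fiber_card_addhom {G H : Type*} [AddCommGroup G] [AddCommGroup H] (f : G →+ H) (c : H) :
    Nat.card {y : G // f y = c} =
      if c ∈ Set.range f then Nat.card f.ker else 0 := by
  split_ifs with h
  · obtain ⟨y0, hy0⟩ := h
    refine Nat.card_congr ⟨fun y => ⟨y.1 - y0, ?_⟩, fun z => ⟨z.1 + y0, ?_⟩, ?_, ?_⟩
    · simp [AddMonoidHom.mem_ker, map_sub, y.2, hy0]
    · have hz := z.2
      rw [AddMonoidHom.mem_ker] at hz
      simp [map_add, hz, hy0]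
    · intro y; ext; simp
    · intro z; ext; simp
  · have : IsEmpty {y : G // f y = c} := ⟨fun y => h ⟨y.1, y.2⟩⟩
    simp

lemma card_range_mul_card_ker {G H : Type*} [AddCommGroup G] [AddCommGroup H] (f : G →+ H) :
    Nat.card f.range * Nat.card f.ker = Nat.card G := by
  rw [← Nat.card_congr (QuotientAddGroup.quotientKerEquivRange f).toEquiv]
  exact (AddSubgroup.card_eq_card_quotient_mul_card_addSubgroup f.ker).symm

lemma card_prod_eq_sum {α β : Type*} [Fintype α] [Finite β] (P : α → β → Prop) :
    Nat.card {p : α × β // P p.1 p.2} = ∑ a : α, Nat.card {b : β // P a b} := by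
  rw [Nat.card_congr (Equiv.subtypeProdEquivSigmaSubtype P)]
  have : ∀ a, Fintype {b : β // P a b} := fun a => Fintype.ofFinite _
  rw [Nat.card_eq_fintype_card, Fintype.card_sigma]
  simp [Nat.card_eq_fintype_card]

lemma tele {K : Type*} [Field K] [CharP K 2] (y : K) (r : ℕ) :
    (∑ i ∈ range r, y ^ 2 ^ i) ^ 2 + (∑ i ∈ range r, y ^ 2 ^ i) = y ^ 2 ^ r + y := by
  induction r with
  | zero => simp [CharTwo.add_self_eq_zero]
  | succ m ih =>
    rw [sum_range_succ, add_pow_char (p := 2)]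
    rw [← pow_mul, ← pow_succ]
    have h2 : ∀ a : K, a + a = 0 := fun a => CharTwo.add_self_eq_zero a
    linear_combination ih + h2 (y ^ 2 ^ m)

lemma addsubgroup_card_filter {G : Type*} [AddCommGroup G] [Fintype G] (S : AddSubgroup G)
    (p : G → Prop) [DecidablePred p] (h : ∀ g, g ∈ S ↔ p g) : Nat.card S = (univ.filter p).card := by
  rw [Nat.card_eq_fintype_card]
  exact (Fintype.card_congr (Equiv.subtypeEquivRight h)).trans (Fintype.card_subtype p)

/-- Let `q = 2 ^ r` be an even prime power, `n ≥ 1`, `Fq` a field with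
`q` elements and `K` an extension of `Fq` of degree `n`.  With `N` the number of pairs
`(x, y) ∈ K × K` with `x·(y^q + y) = x² + 1` and, for nonzero `α ∈ Fq`, `N_α` the number
of pairs with `x·(y² + y) = α·(x² + 1)`, we have
`N − q^n + 1 = ∑_{α ∈ Fq, α ≠ 0} (N_α − q^n + 1)`. -/
theorem stmt5 (r q n : ℕ) (hr : 1 ≤ r) (hq : q = 2 ^ r) (hn : 1 ≤ n)
    (Fq K : Type) [Field Fq] [Fintype Fq] [DecidableEq Fq] [Field K] [Fintype K] [Algebra Fq K]
    (hFq : Fintype.card Fq = q) (hK : Module.finrank Fq K = n) :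
    (Nat.card {xy : K × K // xy.1 * (xy.2 ^ q + xy.2) = xy.1 ^ 2 + 1} : ℤ)
        - (q : ℤ) ^ n + 1 =
    ∑ α : Fqˣ, ((Nat.card {xy : K × K // xy.1 * (xy.2 ^ 2 + xy.2) =
        algebraMap Fq K (α : Fq) * (xy.1 ^ 2 + 1)} : ℤ) - (q : ℤ) ^ n + 1) := by
  have hq2 : 2 ≤ q := by
    subst hq; calc 2 = 2 ^ 1 := (pow_one 2).symm
    _ ≤ 2 ^ r := Nat.pow_le_pow_right (by norm_num) hr
  -- characteristic 2
  haveI hch2 : CharP Fq 2 := by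
    obtain ⟨m, hp, hcard⟩ := FiniteField.card Fq (ringChar Fq)
    have hdvd : ringChar Fq ∣ 2 ^ r := by
      rw [← hq, ← hFq, hcard]
      exact dvd_pow_self _ m.ne_zero
    have h2 : ringChar Fq = 2 :=
      (Nat.prime_dvd_prime_iff_eq hp Nat.prime_two).mp (hp.dvd_of_dvd_pow hdvd)
    exact h2 ▸ ringChar.charP Fq
  haveI hchK : CharP K 2 := charP_of_injective_algebraMap (algebraMap Fq K).injective 2
  haveI : ExpChar K 2 := ExpChar.prime Nat.prime_two
  have hcardK : Fintype.card K = q ^ n := by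
    rw [Module.card_eq_pow_finrank (K := Fq), hFq, hK]
  -- the additive maps
  set φ : K →+ K := AddMonoidHom.mk' (fun y : K => y ^ q + y)
    (by intro a b; simp only [hq, add_pow_char_pow]; ring) with hφ
  set ψ : K →+ K := AddMonoidHom.mk' (fun y : K => y ^ 2 + y)
    (by intro a b; simp only [add_pow_char (p := 2)]; ring) with hψ
  set V := φ.range with hVdef
  set W := ψ.range with hWdef
  have hkerφ : Nat.card φ.ker = q := by
    have hmem : ∀ y : K, y ∈ φ.ker ↔ y ^ q + y = 0 := fun y => by
      rw [AddMonoidHom.mem_ker, hφ, AddMonoidHom.mk'_apply]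
    rw [addsubgroup_card_filter φ.ker _ hmem]
    have hdeg : (Polynomial.X ^ q - Polynomial.X : Polynomial K).natDegree = q := by
      rw [Polynomial.natDegree_sub_eq_left_of_natDegree_lt, Polynomial.natDegree_X_pow]
      rw [Polynomial.natDegree_X, Polynomial.natDegree_X_pow]; omega
    have hne : (Polynomial.X ^ q - Polynomial.X : Polynomial K) ≠ 0 := by
      intro h0
      rw [h0, Polynomial.natDegree_zero] at hdeg; omega
    have hub : (univ.filter fun y : K => y ^ q + y = 0).card ≤ q := by
      have hsub : (univ.filter fun y : K => y ^ q + y = 0) ⊆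
          (Polynomial.X ^ q - Polynomial.X : Polynomial K).roots.toFinset := by
        intro y hy
        rw [mem_filter] at hy
        rw [Multiset.mem_toFinset, Polynomial.mem_roots hne]
        simp only [Polynomial.IsRoot, Polynomial.eval_sub, Polynomial.eval_pow,
          Polynomial.eval_X]
        rw [sub_eq_add_neg, CharTwo.neg_eq]
        exact hy.2
      calc (univ.filter fun y : K => y ^ q + y = 0).card
          ≤ (Polynomial.X ^ q - Polynomial.X : Polynomial K).roots.toFinset.card :=
            Finset.card_le_card hsub
        _ ≤ Multiset.card (Polynomial.X ^ q - Polynomial.X : Polynomial K).roots :=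
            Multiset.toFinset_card_le _
        _ ≤ (Polynomial.X ^ q - Polynomial.X : Polynomial K).natDegree :=
            Polynomial.card_roots' _
        _ = q := hdeg
    have hlb : q ≤ (univ.filter fun y : K => y ^ q + y = 0).card := by
      have hsub : (univ.image (algebraMap Fq K)) ⊆
          (univ.filter fun y : K => y ^ q + y = 0) := by
        intro y hy
        rw [mem_image] at hy
        obtain ⟨β, -, rfl⟩ := hy
        rw [mem_filter]
        refine ⟨mem_univ _, ?_⟩
        rw [← map_pow, ← hFq, FiniteField.pow_card, ← map_add, CharTwo.add_self_eq_zero,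
          map_zero]
      calc q = (univ.image (algebraMap Fq K)).card := by
            rw [Finset.card_image_of_injective _ (algebraMap Fq K).injective, card_univ, hFq]
        _ ≤ _ := Finset.card_le_card hsub
    omega
  have hkerψ : Nat.card ψ.ker = 2 := by
    have hmem : ∀ y : K, y ∈ ψ.ker ↔ y ^ 2 + y = 0 := fun y => by
      rw [AddMonoidHom.mem_ker, hψ, AddMonoidHom.mk'_apply]
    rw [addsubgroup_card_filter ψ.ker _ hmem]
    have : (univ.filter fun y : K => y ^ 2 + y = 0) = {0, 1} := by
      ext y
      rw [mem_filter]
      constructor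
      · rintro ⟨-, hy⟩
        have : y * (y + 1) = 0 := by linear_combination hy
        rcases mul_eq_zero.mp this with h | h
        · simp [h]
        · have hy1 : y = -1 := by linear_combination h
          have hneg := CharTwo.neg_eq (R := K) 1
          simp [hy1.trans hneg]
      · rintro h
        refine ⟨mem_univ _, ?_⟩
        rcases mem_insert.mp h with rfl | h
        · simp
        · rw [mem_singleton] at h; subst h
          have := CharTwo.add_self_eq_zero (R := K) 1
          linear_combination this
    rw [this]
    rw [card_insert_of_notMem (by simp), card_singleton]
  have hcardK' : Nat.card K = q ^ n := by rw [Nat.card_eq_fintype_card, hcardK]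
  have hV : Nat.card V * q = q ^ n := by
    have := card_range_mul_card_ker φ
    rwa [hkerφ, hcardK'] at this
  have hW : Nat.card W * 2 = q ^ n := by
    have := card_range_mul_card_ker ψ
    rwa [hkerψ, hcardK'] at this
  have hVW : ∀ z : K, z ∈ V → z ∈ W := by
    intro z hz
    obtain ⟨y, rfl⟩ := AddMonoidHom.mem_range.mp hz
    refine AddMonoidHom.mem_range.mpr ⟨∑ i ∈ range r, y ^ 2 ^ i, ?_⟩
    rw [hψ, AddMonoidHom.mk'_apply, tele, hφ, AddMonoidHom.mk'_apply, hq]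
  have hVFc : ∀ (z : K), z ∈ V → ∀ α : Fq, algebraMap Fq K α * z ∈ W := by
    intro z hz α
    obtain ⟨y, rfl⟩ := AddMonoidHom.mem_range.mp hz
    apply hVW
    refine AddMonoidHom.mem_range.mpr ⟨algebraMap Fq K α * y, ?_⟩
    show ((algebraMap Fq K) α * y) ^ q + (algebraMap Fq K) α * y
        = (algebraMap Fq K) α * (y ^ q + y)
    rw [mul_pow, ← map_pow, ← hFq, FiniteField.pow_card]
    ring
  have hFcV : ∀ z : K, (∀ α : Fq, algebraMap Fq K α * z ∈ W) → z ∈ V := by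
    intro c hc
    let Fc : Submodule Fq K :=
      { carrier := {z : K | ∀ α : Fq, algebraMap Fq K α * z ∈ W}
        add_mem' := fun {a b} ha hb α => by rw [mul_add]; exact W.add_mem (ha α) (hb α)
        zero_mem' := fun α => by rw [mul_zero]; exact W.zero_mem
        smul_mem' := fun β z hz α => by
          rw [Algebra.smul_def, ← mul_assoc, ← map_mul]; exact hz (α * β) }
    have hsubVF : (V : Set K) ⊆ (Fc : Set K) := fun z hz => hVFc z hz
    have hsubFW : (Fc : Set K) ⊆ (W : Set K) := fun z hz => by
      have := hz (1 : Fq); rwa [map_one, one_mul] at this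
    have hcardFc : Nat.card Fc = q ^ (Module.finrank Fq Fc) := by
      rw [Nat.card_eq_fintype_card, Module.card_eq_pow_finrank (K := Fq), hFq]
    have hle : Module.finrank Fq Fc ≤ n := hK ▸ Submodule.finrank_le Fc
    have hWlt : Nat.card W < q ^ n := by
      have h1 : 0 < Nat.card W := Nat.card_pos
      omega
    have hFcleW : Nat.card Fc ≤ Nat.card W := by
      have := Set.ncard_le_ncard hsubFW (Set.toFinite _)
      rwa [← Nat.card_coe_set_eq, ← Nat.card_coe_set_eq,
        SetLike.coe_sort_coe, SetLike.coe_sort_coe] at this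
    have hlt : Module.finrank Fq Fc < n := by
      rcases lt_or_eq_of_le hle with h | h
      · exact h
      · exfalso; rw [hcardFc, h] at hFcleW; omega
    have hcardV : Nat.card V = q ^ (n - 1) := by
      have h1 : q ^ n = q ^ (n - 1) * q := by rw [← pow_succ]; congr 1; omega
      rw [h1] at hV
      exact Nat.eq_of_mul_eq_mul_right (by omega) hV
    have hFcle : Nat.card Fc ≤ Nat.card V := by
      rw [hcardFc, hcardV]
      exact Nat.pow_le_pow_right (by omega) (by omega)
    have hVFc' : (V : Set K) = (Fc : Set K) := by
      refine Set.eq_of_subset_of_ncard_le hsubVF ?_ (Set.toFinite _)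
      rw [← Nat.card_coe_set_eq, ← Nat.card_coe_set_eq,
        SetLike.coe_sort_coe, SetLike.coe_sort_coe]
      exact hFcle
    have hcFc : c ∈ (Fc : Set K) := hc
    rw [← hVFc'] at hcFc
    exact hcFc
  have hquot : Nat.card (K ⧸ W) = 2 := by
    have h := AddSubgroup.card_eq_card_quotient_mul_card_addSubgroup W
    rw [hcardK', ← hW, mul_comm] at h
    have hWpos : 0 < Nat.card W := Nat.card_pos
    exact Nat.eq_of_mul_eq_mul_right hWpos h.symm
  -- key pointwise identity
  have key : ∀ c : K, 2 * ((univ.filter fun α : Fqˣ => algebraMap Fq K (α : Fq) * c ∈ W).card) + 2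
      = q + q * (if c ∈ V then 1 else 0) := by
    intro c
    by_cases hc : c ∈ V
    · rw [filter_true_of_mem (fun (α : Fqˣ) _ => hVFc c hc (α : Fq)), card_univ, Fintype.card_units,
        hFq, if_pos hc]
      omega
    · rw [if_neg hc]
      set M : Fq →+ K := (AddMonoidHom.mulRight c).comp (algebraMap Fq K).toAddMonoidHom with hM
      set L : Fq →+ K ⧸ W := (QuotientAddGroup.mk' W).comp M with hL
      have hMa : ∀ a : Fq, M a = algebraMap Fq K a * c := fun a => rfl
      have hLker : ∀ a : Fq, a ∈ L.ker ↔ algebraMap Fq K a * c ∈ W := by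
        intro a
        rw [AddMonoidHom.mem_ker, hL, AddMonoidHom.comp_apply, QuotientAddGroup.mk'_apply,
          QuotientAddGroup.eq_zero_iff, hMa]
      have hrange2 : Nat.card L.range = 2 := by
        have hdvd : Nat.card L.range ∣ 2 := by
          rw [← hquot]; exact AddSubgroup.card_addSubgroup_dvd_card L.range
        have hne : Nat.card L.range ≠ 1 := by
          intro h1
          apply hc
          apply hFcV
          intro α
          rw [← hLker, AddMonoidHom.mem_ker]
          have hbot : L.range = ⊥ := AddSubgroup.eq_bot_of_card_eq _ h1
          have hmem : L α ∈ L.range := ⟨α, rfl⟩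
          rw [hbot, AddSubgroup.mem_bot] at hmem
          exact hmem
        rcases (Nat.dvd_prime Nat.prime_two).mp hdvd with h | h
        · exact absurd h hne
        · exact h
      have hT : Nat.card L.ker * 2 = q := by
        have h := card_range_mul_card_ker L
        rw [hrange2] at h
        have h2 : Nat.card Fq = q := by rw [Nat.card_eq_fintype_card, hFq]
        omega
      have hTfilter : Nat.card L.ker
          = (univ.filter fun a : Fq => algebraMap Fq K a * c ∈ W).card :=
        addsubgroup_card_filter L.ker _ hLker
      have hins : (univ.filter fun a : Fq => algebraMap Fq K a * c ∈ W)
          = insert (0 : Fq)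
            ((univ.filter fun α : Fqˣ => algebraMap Fq K (α : Fq) * c ∈ W).image Units.val) := by
        ext a
        simp only [mem_insert, mem_image, mem_filter, mem_univ, true_and]
        constructor
        · intro ha
          by_cases h0 : a = 0
          · left; exact h0
          · right; exact ⟨Units.mk0 a h0, ha, rfl⟩
        · rintro (rfl | ⟨α, hα, rfl⟩)
          · rw [map_zero, zero_mul]; exact W.zero_mem
          · exact hα
      have hcards : (univ.filter fun a : Fq => algebraMap Fq K a * c ∈ W).card
          = (univ.filter fun α : Fqˣ => algebraMap Fq K (α : Fq) * c ∈ W).card + 1 := by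
        rw [hins, card_insert_of_notMem, card_image_of_injective _ Units.val_injective]
        intro h0
        rw [mem_image] at h0
        obtain ⟨α, -, hα⟩ := h0
        exact α.ne_zero hα
      omega
  -- fiber counts
  have hA : ∀ x : K, (Nat.card {y : K // x * (y ^ q + y) = x ^ 2 + 1})
      = if x = 0 then 0 else (if (x ^ 2 + 1) * x⁻¹ ∈ V then q else 0) := by
    intro x
    by_cases hx : x = 0
    · subst hx
      rw [if_pos rfl]
      have : IsEmpty {y : K // (0 : K) * (y ^ q + y) = (0 : K) ^ 2 + 1} := ⟨fun y => by
        have h := y.2; rw [zero_mul] at h; simp at h⟩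
      exact Nat.card_of_isEmpty
    · rw [if_neg hx]
      have hEq : ∀ y : K, (x * (y ^ q + y) = x ^ 2 + 1) ↔ (φ y = (x ^ 2 + 1) * x⁻¹) := by
        intro y
        have h0 : φ y = y ^ q + y := rfl
        rw [h0, ← div_eq_mul_inv, eq_div_iff hx, mul_comm]
      rw [Nat.card_congr (Equiv.subtypeEquivRight hEq), fiber_card_addhom, hkerφ]
      by_cases hv : (x ^ 2 + 1) * x⁻¹ ∈ V
      · rw [if_pos hv, if_pos (show (x ^ 2 + 1) * x⁻¹ ∈ Set.range φ from hv)]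
      · rw [if_neg hv, if_neg (show (x ^ 2 + 1) * x⁻¹ ∉ Set.range φ from hv)]
  have hB : ∀ (α : Fqˣ) (x : K), (Nat.card {y : K // x * (y ^ 2 + y) =
        algebraMap Fq K (α : Fq) * (x ^ 2 + 1)})
      = if x = 0 then 0 else
          (if algebraMap Fq K (α : Fq) * ((x ^ 2 + 1) * x⁻¹) ∈ W then 2 else 0) := by
    intro α x
    by_cases hx : x = 0
    · subst hx
      rw [if_pos rfl]
      have : IsEmpty {y : K // (0 : K) * (y ^ 2 + y) =
          algebraMap Fq K (α : Fq) * ((0 : K) ^ 2 + 1)} := ⟨fun y => by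
        have h := y.2
        rw [zero_mul] at h
        norm_num at h
        exact α.ne_zero ((map_eq_zero _).mp h.symm)⟩
      exact Nat.card_of_isEmpty
    · rw [if_neg hx]
      have hEq : ∀ y : K, (x * (y ^ 2 + y) = algebraMap Fq K (α : Fq) * (x ^ 2 + 1))
          ↔ (ψ y = algebraMap Fq K (α : Fq) * ((x ^ 2 + 1) * x⁻¹)) := by
        intro y
        have h0 : ψ y = y ^ 2 + y := rfl
        rw [h0, ← mul_assoc, ← div_eq_mul_inv, eq_div_iff hx, mul_comm]
      rw [Nat.card_congr (Equiv.subtypeEquivRight hEq), fiber_card_addhom, hkerψ]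
      by_cases hv : algebraMap Fq K (α : Fq) * ((x ^ 2 + 1) * x⁻¹) ∈ W
      · rw [if_pos hv, if_pos (show _ ∈ Set.range ψ from hv)]
      · rw [if_neg hv, if_neg (show _ ∉ Set.range ψ from hv)]
  -- assembly
  have hN : Nat.card {xy : K × K // xy.1 * (xy.2 ^ q + xy.2) = xy.1 ^ 2 + 1}
      = ∑ x : K, Nat.card {y : K // x * (y ^ q + y) = x ^ 2 + 1} :=
    card_prod_eq_sum (fun x y : K => x * (y ^ q + y) = x ^ 2 + 1)
  have hsum : ∀ α : Fqˣ, Nat.card {xy : K × K // xy.1 * (xy.2 ^ 2 + xy.2) =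
        algebraMap Fq K (α : Fq) * (xy.1 ^ 2 + 1)}
      = ∑ x : K, Nat.card {y : K // x * (y ^ 2 + y)
          = algebraMap Fq K (α : Fq) * (x ^ 2 + 1)} :=
    fun α => card_prod_eq_sum
      (fun x y : K => x * (y ^ 2 + y) = algebraMap Fq K (α : Fq) * (x ^ 2 + 1))
  have hperx : ∀ x : K, (∑ α : Fqˣ, (Nat.card {y : K // x * (y ^ 2 + y)
        = algebraMap Fq K (α : Fq) * (x ^ 2 + 1)} : ℤ))
      = (if x = 0 then 0 else (q : ℤ) - 2)
        + (Nat.card {y : K // x * (y ^ q + y) = x ^ 2 + 1} : ℤ) := by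
    intro x
    by_cases hx : x = 0
    · rw [if_pos hx]
      subst hx
      rw [hA 0, if_pos rfl]
      simp only [hB _ 0, if_pos rfl]
      simp
    · rw [if_neg hx, hA x, if_neg hx]
      have h1 : ∀ α : Fqˣ, (Nat.card {y : K // x * (y ^ 2 + y)
            = algebraMap Fq K (α : Fq) * (x ^ 2 + 1)} : ℤ)
          = if algebraMap Fq K (α : Fq) * ((x ^ 2 + 1) * x⁻¹) ∈ W then 2 else 0 := by
        intro α
        rw [hB α x, if_neg hx]
        split_ifs <;> simp
      rw [Finset.sum_congr rfl fun α _ => h1 α]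
      rw [Finset.sum_ite, Finset.sum_const, Finset.sum_const, smul_zero, add_zero,
        nsmul_eq_mul]
      have hk := key ((x ^ 2 + 1) * x⁻¹)
      by_cases hv : (x ^ 2 + 1) * x⁻¹ ∈ V
      · rw [if_pos hv]
        rw [if_pos hv, mul_one] at hk
        have hFn : (univ.filter fun α : Fqˣ =>
            algebraMap Fq K (α : Fq) * ((x ^ 2 + 1) * x⁻¹) ∈ W).card = q - 1 := by omega
        rw [hFn]
        push_cast [Nat.cast_sub (show 1 ≤ q by omega)]
        ring
      · rw [if_neg hv]
        rw [if_neg hv, mul_zero, add_zero] at hk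
        have hc : (2 * ((univ.filter fun α : Fqˣ =>
            algebraMap Fq K (α : Fq) * ((x ^ 2 + 1) * x⁻¹) ∈ W).card : ℤ) + 2) = q := by
          exact_mod_cast hk
        push_cast
        linarith
  rw [hN]
  simp only [hsum, Nat.cast_sum]
  rw [Finset.sum_add_distrib, Finset.sum_sub_distrib, Finset.sum_comm, Finset.sum_const,
    Finset.sum_const, card_univ]
  rw [Finset.sum_congr rfl fun x _ => hperx x]
  rw [Finset.sum_add_distrib]
  have hite : (∑ x : K, if x = 0 then (0 : ℤ) else (q : ℤ) - 2)
      = ((q : ℤ) ^ n - 1) * ((q : ℤ) - 2) := by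
    rw [Finset.sum_ite, Finset.sum_const, Finset.sum_const, smul_zero, zero_add,
      nsmul_eq_mul]
    have hcard : (univ.filter fun x : K => ¬x = 0).card = q ^ n - 1 := by
      have : (univ.filter fun x : K => ¬x = 0) = univ.erase 0 := by
        ext y; simp [Finset.mem_erase, and_comm]
      rw [this, Finset.card_erase_of_mem (mem_univ _), card_univ, hcardK]
    rw [hcard, Nat.cast_sub (Nat.one_le_pow n q (by omega)), Nat.cast_pow, Nat.cast_one]
  rw [hite, Fintype.card_units, hFq]
  rw [nsmul_eq_mul, nsmul_eq_mul, Nat.cast_sub (show 1 ≤ q by omega), Nat.cast_one]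

  ring
end

section
/- Let p be a prime, q = p^r, n ≥ 1, and let α ∈ F_q be nonzero. Let B ⊆ F_q be a complete set of representatives of the cosets of F_p^× in F_q^× (so |B| = (q−1)/(p−1)). Let N_α denote the number of pairs (x,y) ∈ F_{q^n} × F_{q^n} satisfying x·(y^q − y) = α·x² − 1, and for β ∈ B let N_{α,β} denote the number of pairs (x,y) ∈ F_{q^n} × F_{q^n} satisfying x·(y^p − y) = β·(α·x² − 1). Then N_α − q^n + 1 = ∑_{β ∈ B} (N_{α,β} − q^n + 1). (This is the affine form of the statement that the curve C_α : x(y^q−y)=αx²−1 over F_q is the fiber product of the curves C_{α,β} : x(y^p−y)=β(αx²−1), each projective curve having exactly two points at infinity, so that #C_α(F_{q^n}) − (q^n+1) = ∑_{β∈B} (#C_{α,β}(F_{q^n}) − (q^n+1)).) -/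
open Finset

section AuxStmt6

lemma aux_fiber_card {G H : Type*} [AddCommGroup G] [AddCommGroup H] [Fintype G]
    [DecidableEq H] (f : G → H) (hf : ∀ a b, f (a - b) = f a - f b) (c : H) (y₀ : G)
    (h : f y₀ = c) :
    (univ.filter fun y => f y = c).card = (univ.filter fun y => f y = 0).card := by
  apply Finset.card_bij (fun y _ => y - y₀)
  · intro a ha
    simp only [mem_filter, mem_univ, true_and] at ha ⊢
    rw [hf, ha, h, sub_self]
  · intro a _ b _ hab
    exact sub_left_injective hab
  · intro b hb
    simp only [mem_filter, mem_univ, true_and] at hb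
    refine ⟨b + y₀, ?_, by simp⟩
    simp only [mem_filter, mem_univ, true_and]
    have h2 := hf (b + y₀) y₀
    simp only [add_sub_cancel_right, hb, h] at h2
    exact sub_eq_zero.mp h2.symm

lemma aux_ker_mul_image {G H : Type*} [AddCommGroup G] [AddCommGroup H] [Fintype G]
    [DecidableEq H] (f : G → H) (hf : ∀ a b, f (a - b) = f a - f b) :
    (univ.filter fun y => f y = 0).card * (univ.image f).card = Fintype.card G := by
  classical
  have hcong : ∀ c ∈ univ.image f,
      (univ.filter fun y => f y = c).card = (univ.filter fun y => f y = 0).card := by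
    intro c hc
    obtain ⟨y₀, -, hy₀⟩ := mem_image.1 hc
    exact aux_fiber_card f hf c y₀ hy₀
  calc (univ.filter fun y => f y = 0).card * (univ.image f).card
      = ∑ _c ∈ univ.image f, (univ.filter fun y => f y = 0).card := by
        rw [Finset.sum_const, smul_eq_mul, mul_comm]
    _ = ∑ c ∈ univ.image f, (univ.filter fun y => f y = c).card :=
        Finset.sum_congr rfl fun c hc => (hcong c hc).symm
    _ = (univ : Finset G).card :=
        (Finset.card_eq_sum_card_fiberwise (fun x _ => mem_image_of_mem f (mem_univ x))).symm
    _ = Fintype.card G := Finset.card_univ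

lemma aux_pow_card_le {F : Type*} [Field F] [Fintype F] [DecidableEq F] {m : ℕ}
    (hm : 2 ≤ m) : (univ.filter fun y : F => y ^ m = y).card ≤ m := by
  classical
  set Q : Polynomial F := Polynomial.X ^ m - Polynomial.X with hQdef
  have hdeg : Q.natDegree = m := by
    rw [hQdef]
    rw [Polynomial.natDegree_sub_eq_left_of_natDegree_lt]
    · exact Polynomial.natDegree_X_pow m
    · rw [Polynomial.natDegree_X, Polynomial.natDegree_X_pow]; omega
  have hQ0 : Q ≠ 0 := by
    intro h
    rw [h, Polynomial.natDegree_zero] at hdeg; omega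
  have hsub : (univ.filter fun y : F => y ^ m = y) ⊆ Q.roots.toFinset := by
    intro y hy
    simp only [mem_filter, mem_univ, true_and] at hy
    rw [Multiset.mem_toFinset, Polynomial.mem_roots hQ0]
    simp [Polynomial.IsRoot, hQdef, hy]
  calc (univ.filter fun y : F => y ^ m = y).card ≤ Q.roots.toFinset.card :=
        Finset.card_le_card hsub
    _ ≤ Multiset.card Q.roots := Multiset.toFinset_card_le _
    _ ≤ Q.natDegree := Polynomial.card_roots' Q
    _ = m := hdeg

lemma aux_fixed_eq_image {F0 E : Type*} [Field F0] [Field E] [Fintype F0] [Fintype E]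
    [DecidableEq E] (φ : F0 →+* E) {m : ℕ} (hm : 2 ≤ m) (hcard : Fintype.card F0 = m)
    (hfix : ∀ a : F0, φ a ^ m = φ a) :
    (univ.filter fun y : E => y ^ m = y) = univ.image φ := by
  symm
  apply Finset.eq_of_subset_of_card_le
  · intro y hy
    obtain ⟨a, -, rfl⟩ := mem_image.1 hy
    simp [hfix a]
  · calc (univ.filter fun y : E => y ^ m = y).card ≤ m := aux_pow_card_le hm
      _ = (univ.image φ).card := by
          rw [Finset.card_image_of_injective _ φ.injective, card_univ, hcard]

lemma aux_card_prod {γ δ : Type*} [Fintype γ] [Fintype δ] (P : γ × δ → Prop)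
    [DecidablePred P] :
    Nat.card {xy : γ × δ // P xy} = ∑ x : γ, (univ.filter fun y => P (x, y)).card := by
  have e : {xy : γ × δ // P xy} ≃ Σ x : γ, {y : δ // P (x, y)} :=
    (Equiv.subtypeEquivRight (fun x => by rw [Prod.mk.eta])).trans
      (Equiv.subtypeProdEquivSigmaSubtype fun a b => P (a, b))
  classical
  rw [Nat.card_eq_fintype_card, Fintype.card_congr e, Fintype.card_sigma]
  exact Finset.sum_congr rfl fun x _ => Fintype.card_subtype _

lemma aux_swap {ι κ : Type*} (s : Finset ι) (u : Finset κ) (P : ι → κ → Prop)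
    [∀ i k, Decidable (P i k)] :
    ∑ i ∈ s, (u.filter fun k => P i k).card = ∑ k ∈ u, (s.filter fun i => P i k).card := by
  simp only [Finset.card_filter]
  exact Finset.sum_comm

end AuxStmt6

/-- Let `p` be a prime, `q = p ^ r`, `n ≥ 1`, `Fq` a field with `q`
elements, `K` an extension of `Fq` of degree `n`, and `α ∈ Fq` nonzero.  Let `B ⊆ Fq` be a
complete set of representatives of the cosets of `F_p^×` in `Fq^×` (an element `c ∈ Fq^×`
lies in the prime subfield `F_p` iff `c ^ p = c`).  With `N_α` the number of pairs
`(x, y) ∈ K × K` with `x·(y^q − y) = α·x² − 1` and, for `β ∈ B`, `N_{α,β}` the number of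
pairs with `x·(y^p − y) = β·(α·x² − 1)`, we have
`N_α − q^n + 1 = ∑_{β ∈ B} (N_{α,β} − q^n + 1)`. -/
theorem stmt6 (p r q n : ℕ) [Fact p.Prime] (hr : 1 ≤ r) (hq : q = p ^ r) (hn : 1 ≤ n)
    (Fq K : Type) [Field Fq] [Fintype Fq] [Field K] [Fintype K] [Algebra Fq K]
    (hFq : Fintype.card Fq = q) (hK : Module.finrank Fq K = n)
    (B : Finset Fq) (hB0 : ∀ β ∈ B, β ≠ 0)
    (hBrep : ∀ γ : Fq, γ ≠ 0 → ∃! β, β ∈ B ∧ (γ * β⁻¹) ^ p = γ * β⁻¹)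
    (α : Fq) (hα : α ≠ 0) :
    (Nat.card {xy : K × K //
        xy.1 * (xy.2 ^ q - xy.2) = algebraMap Fq K α * xy.1 ^ 2 - 1} : ℤ)
        - (q : ℤ) ^ n + 1 =
    ∑ β ∈ B, ((Nat.card {xy : K × K // xy.1 * (xy.2 ^ p - xy.2) =
        algebraMap Fq K β * (algebraMap Fq K α * xy.1 ^ 2 - 1)} : ℤ)
        - (q : ℤ) ^ n + 1) := by
  classical
  have hpP : p.Prime := Fact.out
  have hp2 : 2 ≤ p := hpP.two_le
  have hq2 : 2 ≤ q := by
    rw [hq]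
    calc 2 ≤ p := hp2
      _ = p ^ 1 := (pow_one p).symm
      _ ≤ p ^ r := Nat.pow_le_pow_right (by omega) hr
  -- characteristic p
  haveI hFqp : CharP Fq p := by
    obtain ⟨c, hc⟩ := CharP.exists Fq
    haveI := hc
    obtain ⟨k, hcp, hck⟩ := FiniteField.card Fq c
    have hpc : p = c := by
      have hdvd : p ∣ c ^ (k : ℕ) := by
        rw [← hck, hFq, hq]; exact dvd_pow_self p (by omega)
      exact (Nat.prime_dvd_prime_iff_eq hpP hcp).1 (hpP.dvd_of_dvd_pow hdvd)
    subst hpc; exact hc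
  haveI hKp : CharP K p := charP_of_injective_algebraMap (algebraMap Fq K).injective p
  letI : Algebra (ZMod p) Fq := ZMod.algebra Fq p
  letI : Algebra (ZMod p) K := ZMod.algebra K p
  haveI : IsScalarTower (ZMod p) Fq K :=
    IsScalarTower.of_algebraMap_eq' (RingHom.ext_zmod _ _)
  haveI : Algebra.IsAlgebraic Fq K := Algebra.IsAlgebraic.of_finite Fq K
  haveI : Algebra.IsAlgebraic (ZMod p) K := Algebra.IsAlgebraic.of_finite _ _
  haveI : Algebra.IsAlgebraic (ZMod p) Fq := Algebra.IsAlgebraic.of_finite _ _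
  have hcardK : Fintype.card K = q ^ n := by
    rw [Module.card_eq_pow_finrank (K := Fq) (V := K), hFq, hK]
  have hcardZ : Fintype.card (ZMod p) = p := ZMod.card p
  -- trace transitivity
  have htrans : ∀ y : K,
      Algebra.trace (ZMod p) Fq (Algebra.trace Fq K y) = Algebra.trace (ZMod p) K y :=
    fun y => Algebra.trace_trace y
  -- Frobenius invariance of the trace, q-level
  have hfrobq : ∀ y : K, Algebra.trace Fq K (y ^ q) = Algebra.trace Fq K y := by
    have hφ : ∀ y : K, ((frobenius K p) ^ r) y = y ^ q := by
      intro y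
      rw [hq]
      show ((frobenius K p) ^ r) y = y ^ p ^ r
      rw [RingHom.coe_pow, iterate_frobenius]
    have hcomm : ∀ a : Fq, ((frobenius K p) ^ r) (algebraMap Fq K a) = algebraMap Fq K a := by
      intro a
      have ha : a ^ q = a := by rw [← hFq]; exact FiniteField.pow_card a
      rw [hφ, ← map_pow, ha]
    let σh : K →ₐ[Fq] K := { toRingHom := (frobenius K p) ^ r, commutes' := hcomm }
    have hbij : Function.Bijective σh :=
      Finite.injective_iff_bijective.1 ((frobenius K p ^ r).injective)
    intro y
    have := Algebra.trace_eq_of_algEquiv (AlgEquiv.ofBijective σh hbij) y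
    rwa [show (AlgEquiv.ofBijective σh hbij) y = y ^ q from hφ y] at this
  -- Frobenius invariance of the trace, p-level
  have hfrobp : ∀ y : K, Algebra.trace (ZMod p) K (y ^ p) = Algebra.trace (ZMod p) K y := by
    have hcomm : ∀ a : ZMod p, (frobenius K p) (algebraMap (ZMod p) K a) = algebraMap (ZMod p) K a := by
      intro a
      rw [frobenius_def, ← map_pow, ZMod.pow_card]
    let σh : K →ₐ[ZMod p] K := { toRingHom := frobenius K p, commutes' := hcomm }
    have hbij : Function.Bijective σh :=
      Finite.injective_iff_bijective.1 ((frobenius K p).injective)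
    intro y
    have := Algebra.trace_eq_of_algEquiv (AlgEquiv.ofBijective σh hbij) y
    rwa [show (AlgEquiv.ofBijective σh hbij) y = y ^ p from frobenius_def p y] at this
  -- additivity of the two Artin-Schreier maps
  have hT : ∀ a b : K, ((a - b) ^ q - (a - b)) = (a ^ q - a) - (b ^ q - b) := by
    intro a b
    rw [hq, sub_pow_char_pow]; ring
  have hS : ∀ a b : K, ((a - b) ^ p - (a - b)) = (a ^ p - a) - (b ^ p - b) := by
    intro a b
    rw [sub_pow_char]; ring
  -- kernels
  have hkerT : (univ.filter fun y : K => y ^ q - y = 0) = univ.image (algebraMap Fq K) := by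
    have h1 : (univ.filter fun y : K => y ^ q - y = 0)
        = univ.filter fun y : K => y ^ q = y :=
      Finset.filter_congr fun y _ => by rw [sub_eq_zero]
    rw [h1]
    exact aux_fixed_eq_image (algebraMap Fq K) hq2 hFq (fun a => by
      rw [← map_pow]
      congr 1
      rw [← hFq]; exact FiniteField.pow_card a)
  have hkerTcard : (univ.filter fun y : K => y ^ q - y = 0).card = q := by
    rw [hkerT, Finset.card_image_of_injective _ (algebraMap Fq K).injective, card_univ, hFq]
  have hkerS : (univ.filter fun y : K => y ^ p - y = 0) = univ.image (algebraMap (ZMod p) K) := by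
    have h1 : (univ.filter fun y : K => y ^ p - y = 0)
        = univ.filter fun y : K => y ^ p = y :=
      Finset.filter_congr fun y _ => by rw [sub_eq_zero]
    rw [h1]
    exact aux_fixed_eq_image (algebraMap (ZMod p) K) hp2 hcardZ (fun a => by
      rw [← map_pow, ZMod.pow_card])
  have hkerScard : (univ.filter fun y : K => y ^ p - y = 0).card = p := by
    rw [hkerS, Finset.card_image_of_injective _ (algebraMap (ZMod p) K).injective,
      card_univ, hcardZ]
  -- range of T = kernel of trace (q-level)
  have hTmem : ∀ c : K,
      (c ∈ univ.image fun y : K => y ^ q - y) ↔ Algebra.trace Fq K c = 0 := by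
    have hsub : (univ.image fun y : K => y ^ q - y)
        ⊆ univ.filter fun c : K => Algebra.trace Fq K c = 0 := by
      intro c hc
      obtain ⟨z, -, rfl⟩ := mem_image.1 hc
      simp only [mem_filter, mem_univ, true_and]
      rw [map_sub, hfrobq, sub_self]
    have h1 := aux_ker_mul_image (fun y : K => y ^ q - y) hT
    rw [hkerTcard, hcardK] at h1
    have h2 : (univ.filter fun c : K => Algebra.trace Fq K c = 0).card * q = q ^ n := by
      have h := aux_ker_mul_image (fun y : K => Algebra.trace Fq K y)
        (fun a b => map_sub _ a b)
      rw [Finset.image_univ_of_surjective (Algebra.trace_surjective Fq K),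
        card_univ, hFq, hcardK] at h
      exact h
    have hcards : (univ.filter fun c : K => Algebra.trace Fq K c = 0).card
        ≤ (univ.image fun y : K => y ^ q - y).card :=
      Nat.le_of_mul_le_mul_right
        (le_of_eq (h2.trans (h1.symm.trans (mul_comm q _)))) (by omega : 0 < q)
    have heq := Finset.eq_of_subset_of_card_le hsub hcards
    intro c
    rw [heq, mem_filter]
    simp
  -- range of S = kernel of trace (p-level)
  have hSmem : ∀ c : K,
      (c ∈ univ.image fun y : K => y ^ p - y) ↔ Algebra.trace (ZMod p) K c = 0 := by
    have hsub : (univ.image fun y : K => y ^ p - y)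
        ⊆ univ.filter fun c : K => Algebra.trace (ZMod p) K c = 0 := by
      intro c hc
      obtain ⟨z, -, rfl⟩ := mem_image.1 hc
      simp only [mem_filter, mem_univ, true_and]
      rw [map_sub, hfrobp, sub_self]
    have h1 := aux_ker_mul_image (fun y : K => y ^ p - y) hS
    rw [hkerScard, hcardK] at h1
    have h2 : (univ.filter fun c : K => Algebra.trace (ZMod p) K c = 0).card * p = q ^ n := by
      have h := aux_ker_mul_image (fun y : K => Algebra.trace (ZMod p) K y)
        (fun a b => map_sub _ a b)
      rw [Finset.image_univ_of_surjective (Algebra.trace_surjective (ZMod p) K),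
        card_univ, hcardZ, hcardK] at h
      exact h
    have hcards : (univ.filter fun c : K => Algebra.trace (ZMod p) K c = 0).card
        ≤ (univ.image fun y : K => y ^ p - y).card :=
      Nat.le_of_mul_le_mul_right
        (le_of_eq (h2.trans (h1.symm.trans (mul_comm p _)))) (by omega : 0 < p)
    have heq := Finset.eq_of_subset_of_card_le hsub hcards
    intro c
    rw [heq, mem_filter]
    simp
  -- kernel of trace Fq / ZMod p
  have hkertrFq : (univ.filter fun t : Fq => Algebra.trace (ZMod p) Fq t = 0).card * p = q := by
    have h2 := aux_ker_mul_image (fun y : Fq => Algebra.trace (ZMod p) Fq y)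
      (fun a b => map_sub _ a b)
    rw [Finset.image_univ_of_surjective (Algebra.trace_surjective (ZMod p) Fq),
      card_univ, hcardZ, hFq] at h2
    exact h2
  -- fixed points of frobenius in Fq are the prime field
  have hprime : ∀ l : Fq, l ^ p = l → ∃ μ : ZMod p, algebraMap (ZMod p) Fq μ = l := by
    intro l hl
    have h1 : l ∈ univ.filter fun y : Fq => y ^ p = y := by
      simp only [mem_filter, mem_univ, true_and]; exact hl
    rw [aux_fixed_eq_image (algebraMap (ZMod p) Fq) hp2 hcardZ (fun a => by
      rw [← map_pow, ZMod.pow_card])] at h1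
    obtain ⟨μ, -, hμ⟩ := mem_image.1 h1
    exact ⟨μ, hμ⟩
  have htr_smul : ∀ (μ : ZMod p) (x : Fq),
      Algebra.trace (ZMod p) Fq (algebraMap (ZMod p) Fq μ * x)
        = μ * Algebra.trace (ZMod p) Fq x := by
    intro μ x
    rw [← Algebra.smul_def, map_smul, smul_eq_mul]
  -- cardinality of the prime-field units inside Fq
  have hfixFq : (univ.filter fun l : Fq => l ^ p = l) = univ.image (algebraMap (ZMod p) Fq) :=
    aux_fixed_eq_image (algebraMap (ZMod p) Fq) hp2 hcardZ (fun a => by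
      rw [← map_pow, ZMod.pow_card])
  have hpucard : (univ.filter fun l : Fq => l ^ p = l ∧ l ≠ 0).card = p - 1 := by
    have h1 : (univ.filter fun l : Fq => l ^ p = l ∧ l ≠ 0)
        = (univ.filter fun l : Fq => l ^ p = l).erase 0 := by
      ext l
      simp only [mem_filter, mem_univ, true_and, mem_erase]
      tauto
    have h0mem : (0 : Fq) ∈ univ.filter fun l : Fq => l ^ p = l := by
      simp only [mem_filter, mem_univ, true_and]
      exact zero_pow (by omega)
    have hcardfix : (univ.filter fun l : Fq => l ^ p = l).card = p := by
      rw [hfixFq, Finset.card_image_of_injective _ (algebraMap (ZMod p) Fq).injective,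
        card_univ, hcardZ]
    rw [h1, Finset.card_erase_of_mem h0mem, hcardfix]
  -- the key coset count
  have hBcount : ∀ t : Fq,
      (B.filter fun β => Algebra.trace (ZMod p) Fq (β * t) = 0).card * (p - 1)
        = (univ.filter fun γ : Fq => γ ≠ 0 ∧ Algebra.trace (ZMod p) Fq (γ * t) = 0).card := by
    intro t
    rw [← hpucard, ← Finset.card_product]
    apply Finset.card_bij (fun bl _ => bl.2 * bl.1)
    · rintro ⟨β, l⟩ hm
      simp only [Finset.mem_product, mem_filter, mem_univ, true_and] at hm
      obtain ⟨⟨hβB, hβtr⟩, hlfix, hl0⟩ := hm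
      simp only [mem_filter, mem_univ, true_and]
      refine ⟨mul_ne_zero hl0 (hB0 β hβB), ?_⟩
      obtain ⟨μ, hμ⟩ := hprime l hlfix
      rw [mul_assoc, ← hμ, htr_smul, hβtr, mul_zero]
    · rintro ⟨β₁, l₁⟩ h₁ ⟨β₂, l₂⟩ h₂ heq
      simp only [Finset.mem_product, mem_filter, mem_univ, true_and] at h₁ h₂
      obtain ⟨⟨hβ₁B, -⟩, hl₁fix, hl₁0⟩ := h₁
      obtain ⟨⟨hβ₂B, -⟩, hl₂fix, hl₂0⟩ := h₂
      have hβ₁0 := hB0 _ hβ₁B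
      have hβ₂0 := hB0 _ hβ₂B
      have heq' : l₁ * β₁ = l₂ * β₂ := heq
      have hγ0 : l₁ * β₁ ≠ 0 := mul_ne_zero hl₁0 hβ₁0
      obtain ⟨β', -, huniq⟩ := hBrep (l₁ * β₁) hγ0
      have e₁ : β₁ = β' := huniq β₁ ⟨hβ₁B, by
        rw [mul_inv_cancel_right₀ hβ₁0]; exact hl₁fix⟩
      have e₂ : β₂ = β' := huniq β₂ ⟨hβ₂B, by
        rw [heq', mul_inv_cancel_right₀ hβ₂0]; exact hl₂fix⟩
      have hββ : β₁ = β₂ := e₁.trans e₂.symm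
      have hll : l₁ = l₂ := by
        rw [hββ] at heq'
        exact mul_right_cancel₀ hβ₂0 heq'
      simp [hββ, hll]
    · intro γ hγ
      simp only [mem_filter, mem_univ, true_and] at hγ
      obtain ⟨hγ0, hγtr⟩ := hγ
      obtain ⟨β, ⟨hβB, hβfix⟩, -⟩ := hBrep γ hγ0
      have hβ0 := hB0 _ hβB
      have hl0 : γ * β⁻¹ ≠ 0 := mul_ne_zero hγ0 (inv_ne_zero hβ0)
      obtain ⟨μ, hμ⟩ := hprime _ hβfix
      have hμ0 : μ ≠ 0 := by
        intro h
        rw [h, map_zero] at hμ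
        exact hl0 hμ.symm
      have hγeq : γ = (γ * β⁻¹) * β := by
        rw [inv_mul_cancel_right₀ hβ0]
      have hβtr : Algebra.trace (ZMod p) Fq (β * t) = 0 := by
        have h5 : Algebra.trace (ZMod p) Fq (γ * t)
            = μ * Algebra.trace (ZMod p) Fq (β * t) := by
          rw [← htr_smul, hμ]
          congr 1
          rw [← mul_assoc, ← hγeq]
        rw [h5] at hγtr
        rcases mul_eq_zero.mp hγtr with h | h
        · exact absurd h hμ0
        · exact h
      refine ⟨(β, γ * β⁻¹), ?_, hγeq.symm⟩
      simp only [Finset.mem_product, mem_filter, mem_univ, true_and]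
      exact ⟨⟨hβB, hβtr⟩, hβfix, hl0⟩
  -- count for t = 0
  have hD0 : (univ.filter fun γ : Fq => γ ≠ 0 ∧ Algebra.trace (ZMod p) Fq (γ * 0) = 0).card
      = q - 1 := by
    have h1 : (univ.filter fun γ : Fq => γ ≠ 0 ∧ Algebra.trace (ZMod p) Fq (γ * 0) = 0)
        = univ.erase 0 := by
      ext γ
      simp [mul_zero]
    rw [h1, Finset.card_erase_of_mem (mem_univ 0), card_univ, hFq]
  have hBcard : B.card * (p - 1) = q - 1 := by
    have h := hBcount 0
    have h1 : (B.filter fun β => Algebra.trace (ZMod p) Fq (β * 0) = 0) = B :=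
      Finset.filter_true_of_mem (fun β _ => by rw [mul_zero, map_zero])
    rw [h1, hD0] at h
    exact h
  -- count for t ≠ 0
  have hDne : ∀ t : Fq, t ≠ 0 →
      (univ.filter fun γ : Fq => γ ≠ 0 ∧ Algebra.trace (ZMod p) Fq (γ * t) = 0).card
        = (univ.filter fun δ : Fq => δ ≠ 0 ∧ Algebra.trace (ZMod p) Fq δ = 0).card := by
    intro t ht
    apply Finset.card_bij (fun γ _ => γ * t)
    · intro γ hγ
      simp only [mem_filter, mem_univ, true_and] at hγ ⊢
      exact ⟨mul_ne_zero hγ.1 ht, hγ.2⟩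
    · intro a _ b _ hab
      exact mul_right_cancel₀ ht hab
    · intro δ hδ
      simp only [mem_filter, mem_univ, true_and] at hδ
      refine ⟨δ * t⁻¹, ?_, by rw [inv_mul_cancel_right₀ ht]⟩
      simp only [mem_filter, mem_univ, true_and]
      rw [inv_mul_cancel_right₀ ht]
      exact ⟨mul_ne_zero hδ.1 (inv_ne_zero ht), hδ.2⟩
  have hDnecard :
      ((univ.filter fun δ : Fq => δ ≠ 0 ∧ Algebra.trace (ZMod p) Fq δ = 0).card + 1) * p
        = q := by
    have h0 : (0 : Fq) ∈ univ.filter fun δ : Fq => Algebra.trace (ZMod p) Fq δ = 0 := by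
      simp only [mem_filter, mem_univ, true_and, map_zero]
    -- h0 done
    have h1 : (univ.filter fun δ : Fq => δ ≠ 0 ∧ Algebra.trace (ZMod p) Fq δ = 0)
        = (univ.filter fun δ : Fq => Algebra.trace (ZMod p) Fq δ = 0).erase 0 := by
      ext δ
      simp only [mem_filter, mem_univ, true_and, mem_erase, and_true]
    rw [h1, Finset.card_erase_of_mem h0,
      Nat.sub_add_cancel (Finset.card_pos.mpr ⟨0, h0⟩)]
    exact hkertrFq
  -- counting points on C_alpha
  have hNα : Nat.card {xy : K × K //
        xy.1 * (xy.2 ^ q - xy.2) = algebraMap Fq K α * xy.1 ^ 2 - 1}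
      = q * (univ.filter fun x : K => x ≠ 0 ∧
          Algebra.trace Fq K ((algebraMap Fq K α * x ^ 2 - 1) * x⁻¹) = 0).card := by
    rw [aux_card_prod (fun xy : K × K =>
      xy.1 * (xy.2 ^ q - xy.2) = algebraMap Fq K α * xy.1 ^ 2 - 1)]
    have hper : ∀ x : K, (univ.filter fun y : K =>
        x * (y ^ q - y) = algebraMap Fq K α * x ^ 2 - 1).card
        = if x ≠ 0 ∧ Algebra.trace Fq K ((algebraMap Fq K α * x ^ 2 - 1) * x⁻¹) = 0
          then q else 0 := by
      intro x
      by_cases hx : x = 0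
      · subst hx
        rw [if_neg (by tauto)]
        rw [Finset.card_eq_zero]
        apply Finset.filter_false_of_mem
        intro y _ h
        rw [zero_mul] at h
        simp only [ne_eq, OfNat.ofNat_ne_zero, not_false_eq_true, zero_pow, mul_zero,
          zero_sub] at h
        exact one_ne_zero (neg_eq_zero.mp h.symm)
      · have hcond : (univ.filter fun y : K =>
            x * (y ^ q - y) = algebraMap Fq K α * x ^ 2 - 1)
            = univ.filter fun y : K =>
              y ^ q - y = (algebraMap Fq K α * x ^ 2 - 1) * x⁻¹ := by
          apply Finset.filter_congr
          intro y _
          have h2 : x * ((algebraMap Fq K α * x ^ 2 - 1) * x⁻¹)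
              = algebraMap Fq K α * x ^ 2 - 1 := by
            rw [mul_comm]
            exact inv_mul_cancel_right₀ hx _
          constructor
          · intro h
            exact mul_left_cancel₀ hx (by rw [h2, h])
          · intro h
            rw [h, h2]
        rw [hcond]
        by_cases htr : Algebra.trace Fq K ((algebraMap Fq K α * x ^ 2 - 1) * x⁻¹) = 0
        · rw [if_pos ⟨hx, htr⟩]
          obtain ⟨y₀, -, hy₀⟩ := mem_image.1 ((hTmem _).2 htr)
          rw [aux_fiber_card (fun y : K => y ^ q - y) hT _ y₀ hy₀]
          exact hkerTcard
        · rw [if_neg (fun hcon => htr hcon.2), Finset.card_eq_zero]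
          apply Finset.filter_false_of_mem
          intro y _ h
          exact htr ((hTmem _).1 (mem_image.2 ⟨y, mem_univ y, h⟩))
    rw [Finset.sum_congr rfl (fun x _ => hper x), ← Finset.sum_filter,
      Finset.sum_const, smul_eq_mul, mul_comm]
  -- counting points on C_{alpha,beta}
  have hNβ : ∀ β ∈ B, Nat.card {xy : K × K // xy.1 * (xy.2 ^ p - xy.2) =
        algebraMap Fq K β * (algebraMap Fq K α * xy.1 ^ 2 - 1)}
      = p * (univ.filter fun x : K => x ≠ 0 ∧ Algebra.trace (ZMod p) Fq
          (β * Algebra.trace Fq K ((algebraMap Fq K α * x ^ 2 - 1) * x⁻¹)) = 0).card := by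
    intro β hβ
    have hb : algebraMap Fq K β ≠ 0 := fun hh =>
      hB0 β hβ ((algebraMap Fq K).injective (by rw [hh, map_zero]))
    rw [aux_card_prod (fun xy : K × K => xy.1 * (xy.2 ^ p - xy.2) =
      algebraMap Fq K β * (algebraMap Fq K α * xy.1 ^ 2 - 1))]
    have hper : ∀ x : K, (univ.filter fun y : K =>
        x * (y ^ p - y) = algebraMap Fq K β * (algebraMap Fq K α * x ^ 2 - 1)).card
        = if x ≠ 0 ∧ Algebra.trace (ZMod p) Fq
            (β * Algebra.trace Fq K ((algebraMap Fq K α * x ^ 2 - 1) * x⁻¹)) = 0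
          then p else 0 := by
      intro x
      by_cases hx : x = 0
      · subst hx
        rw [if_neg (by tauto)]
        rw [Finset.card_eq_zero]
        apply Finset.filter_false_of_mem
        intro y _ h
        rw [zero_mul] at h
        simp only [ne_eq, OfNat.ofNat_ne_zero, not_false_eq_true, zero_pow, mul_zero,
          zero_sub, mul_neg, mul_one] at h
        exact hb (neg_eq_zero.mp h.symm)
      · have hcond : (univ.filter fun y : K =>
            x * (y ^ p - y) = algebraMap Fq K β * (algebraMap Fq K α * x ^ 2 - 1))
            = univ.filter fun y : K => y ^ p - y
              = algebraMap Fq K β * (algebraMap Fq K α * x ^ 2 - 1) * x⁻¹ := by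
          apply Finset.filter_congr
          intro y _
          have h2 : x * (algebraMap Fq K β * (algebraMap Fq K α * x ^ 2 - 1) * x⁻¹)
              = algebraMap Fq K β * (algebraMap Fq K α * x ^ 2 - 1) := by
            rw [mul_comm]
            exact inv_mul_cancel_right₀ hx _
          constructor
          · intro h
            exact mul_left_cancel₀ hx (by rw [h2, h])
          · intro h
            rw [h, h2]
        rw [hcond]
        have htreq : Algebra.trace (ZMod p) K
            (algebraMap Fq K β * (algebraMap Fq K α * x ^ 2 - 1) * x⁻¹)
            = Algebra.trace (ZMod p) Fq
              (β * Algebra.trace Fq K ((algebraMap Fq K α * x ^ 2 - 1) * x⁻¹)) := by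
          rw [← htrans]
          congr 1
          rw [mul_assoc, ← Algebra.smul_def, map_smul, smul_eq_mul]
        by_cases htr : Algebra.trace (ZMod p) Fq
            (β * Algebra.trace Fq K ((algebraMap Fq K α * x ^ 2 - 1) * x⁻¹)) = 0
        · rw [if_pos ⟨hx, htr⟩]
          obtain ⟨y₀, -, hy₀⟩ := mem_image.1 ((hSmem _).2 (htreq.trans htr))
          rw [aux_fiber_card (fun y : K => y ^ p - y) hS _ y₀ hy₀]
          exact hkerScard
        · rw [if_neg (fun hcon => htr hcon.2), Finset.card_eq_zero]
          apply Finset.filter_false_of_mem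
          intro y _ h
          exact htr (htreq.symm.trans
            ((hSmem _).1 (mem_image.2 ⟨y, mem_univ y, h⟩)))
    rw [Finset.sum_congr rfl (fun x _ => hper x), ← Finset.sum_filter,
      Finset.sum_const, smul_eq_mul, mul_comm]
  -- swap the double count
  have hswap : (∑ β ∈ B, (univ.filter fun x : K => x ≠ 0 ∧ Algebra.trace (ZMod p) Fq (β * Algebra.trace Fq K ((algebraMap Fq K α * x ^ 2 - 1) * x⁻¹)) = 0).card)
      = ∑ x ∈ (univ.filter fun x : K => x ≠ 0), (B.filter fun β => Algebra.trace (ZMod p) Fq (β * Algebra.trace Fq K ((algebraMap Fq K α * x ^ 2 - 1) * x⁻¹)) = 0).card := by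
    rw [show (∑ β ∈ B, (univ.filter fun x : K => x ≠ 0 ∧ Algebra.trace (ZMod p) Fq (β * Algebra.trace Fq K ((algebraMap Fq K α * x ^ 2 - 1) * x⁻¹)) = 0).card)
        = ∑ β ∈ B, ((univ.filter fun x : K => x ≠ 0).filter fun x => Algebra.trace (ZMod p) Fq (β * Algebra.trace Fq K ((algebraMap Fq K α * x ^ 2 - 1) * x⁻¹)) = 0).card
      from Finset.sum_congr rfl fun β _ =>
        congrArg Finset.card (Finset.filter_filter _ _ _).symm]
    exact aux_swap B (univ.filter fun x : K => x ≠ 0) _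
  have hkey : (∑ β ∈ B, (univ.filter fun x : K => x ≠ 0 ∧ Algebra.trace (ZMod p) Fq (β * Algebra.trace Fq K ((algebraMap Fq K α * x ^ 2 - 1) * x⁻¹)) = 0).card) * (p - 1)
      = (q - 1) * (univ.filter fun x : K => x ≠ 0 ∧ Algebra.trace Fq K ((algebraMap Fq K α * x ^ 2 - 1) * x⁻¹) = 0).card + (univ.filter fun δ : Fq => δ ≠ 0 ∧ Algebra.trace (ZMod p) Fq δ = 0).card * (univ.filter fun x : K => x ≠ 0 ∧ ¬ (Algebra.trace Fq K ((algebraMap Fq K α * x ^ 2 - 1) * x⁻¹) = 0)).card := by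
    rw [hswap, Finset.sum_mul]
    have hstep : ∀ x ∈ (univ.filter fun x : K => x ≠ 0), (B.filter fun β => Algebra.trace (ZMod p) Fq (β * Algebra.trace Fq K ((algebraMap Fq K α * x ^ 2 - 1) * x⁻¹)) = 0).card * (p - 1)
        = (if Algebra.trace Fq K ((algebraMap Fq K α * x ^ 2 - 1) * x⁻¹) = 0 then q - 1 else (univ.filter fun δ : Fq => δ ≠ 0 ∧ Algebra.trace (ZMod p) Fq δ = 0).card) := by
      intro x hx
      rw [hBcount]
      by_cases h : Algebra.trace Fq K ((algebraMap Fq K α * x ^ 2 - 1) * x⁻¹) = 0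
      · rw [if_pos h, h]
        exact hD0
      · rw [if_neg h]
        exact hDne _ h
    rw [Finset.sum_congr rfl hstep, Finset.sum_ite, Finset.sum_const, Finset.sum_const,
      smul_eq_mul, smul_eq_mul, Finset.filter_filter, Finset.filter_filter,
      Nat.mul_comm _ (q - 1), Nat.mul_comm _ (univ.filter fun δ : Fq => δ ≠ 0 ∧ Algebra.trace (ZMod p) Fq δ = 0).card]
  have hMM' : (univ.filter fun x : K => x ≠ 0 ∧ Algebra.trace Fq K ((algebraMap Fq K α * x ^ 2 - 1) * x⁻¹) = 0).card + (univ.filter fun x : K => x ≠ 0 ∧ ¬ (Algebra.trace Fq K ((algebraMap Fq K α * x ^ 2 - 1) * x⁻¹) = 0)).card = (univ.filter fun x : K => x ≠ 0).card := by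
    have h := Finset.card_filter_add_card_filter_not
      (s := (univ.filter fun x : K => x ≠ 0)) (p := fun x => Algebra.trace Fq K ((algebraMap Fq K α * x ^ 2 - 1) * x⁻¹) = 0)
    rw [Finset.filter_filter, Finset.filter_filter] at h
    exact h
  have hUcard : (univ.filter fun x : K => x ≠ 0).card + 1 = q ^ n := by
    have h1 : (univ.filter fun x : K => x ≠ 0) = univ.erase 0 := by
      ext x
      simp [Finset.mem_erase]
    rw [h1, Finset.card_erase_of_mem (mem_univ 0), card_univ, hcardK,
      Nat.sub_add_cancel (Nat.one_le_pow n q (by omega))]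
  -- put everything together
  rw [hNα]
  have hsum_eq : (∑ β ∈ B, ((Nat.card {xy : K × K // xy.1 * (xy.2 ^ p - xy.2) =
        algebraMap Fq K β * (algebraMap Fq K α * xy.1 ^ 2 - 1)} : ℤ)
        - (q : ℤ) ^ n + 1))
      = ∑ β ∈ B, ((p : ℤ) * ((univ.filter fun x : K => x ≠ 0 ∧ Algebra.trace (ZMod p) Fq (β * Algebra.trace Fq K ((algebraMap Fq K α * x ^ 2 - 1) * x⁻¹)) = 0).card : ℤ)
          - ((q : ℤ) ^ n - 1)) :=
    Finset.sum_congr rfl fun β hβ => by rw [hNβ β hβ]; push_cast; ring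
  rw [hsum_eq, Finset.sum_sub_distrib, Finset.sum_const, nsmul_eq_mul, ← Finset.mul_sum]
  have hp1 : (1:ℕ) ≤ p := by omega
  have hq1 : (1:ℕ) ≤ q := by omega
  zify [hp1, hq1] at hkey hBcard
  have z2 : (((univ.filter fun δ : Fq => δ ≠ 0 ∧ Algebra.trace (ZMod p) Fq δ = 0).card : ℤ) + 1) * (p : ℤ) = (q : ℤ) := by exact_mod_cast hDnecard
  have z3 : (((univ.filter fun x : K => x ≠ 0 ∧ Algebra.trace Fq K ((algebraMap Fq K α * x ^ 2 - 1) * x⁻¹) = 0).card : ℤ)) + (((univ.filter fun x : K => x ≠ 0 ∧ ¬ (Algebra.trace Fq K ((algebraMap Fq K α * x ^ 2 - 1) * x⁻¹) = 0)).card : ℤ)) = (((univ.filter fun x : K => x ≠ 0).card : ℤ)) := by exact_mod_cast hMM'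
  have z4 : (((univ.filter fun x : K => x ≠ 0).card : ℤ)) + 1 = (q : ℤ) ^ n := by exact_mod_cast hUcard
  have hpne : ((p : ℤ) - 1) ≠ 0 := by
    have : (2 : ℤ) ≤ (p : ℤ) := by exact_mod_cast hp2
    omega
  apply mul_left_cancel₀ hpne
  push_cast
  push_cast at hkey hBcard
  linear_combination (-(p:ℤ)) * hkey + (-(((univ.filter fun x : K => x ≠ 0 ∧ ¬ (Algebra.trace Fq K ((algebraMap Fq K α * x ^ 2 - 1) * x⁻¹) = 0)).card) : ℤ)) * z2
    + ((p:ℤ) - (q:ℤ)) * z3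
    + ((p:ℤ) - 1 - ((B.card : ℤ)) * ((p:ℤ) - 1)) * z4
    + (((univ.filter fun x : K => x ≠ 0).card : ℤ)) * hBcard
end

section
/- Let q = 2^r be an even prime power and n ≥ 1. For each nonzero α ∈ F_q, let N_α denote the number of pairs (x,y) ∈ F_{q^n} × F_{q^n} satisfying x·(y² + y) = α·(x² + 1). Then q² · F_q(n,0,0) = q^n + (q − 1) · ∑_{α ∈ F_q, α ≠ 0} (N_α − q^n + 2). (Equivalently, F_q(n,0,0) = q^{n−2} + ((q−1)/q²)·∑_{α∈F_q^×}(S_α(F_{q^n}) + 1), where S_α(F_{q^n}) = #C_α(F_{q^n}) − (q^n+1) and the projective curve C_α : x(y²+y)=α(x²+1) over F_q has exactly two points at infinity, so #C_α(F_{q^n}) = N_α + 2.) -/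
open Finset

section Helpers

lemma fiber_card_mul {A B : Type} [AddCommGroup A] [AddCommGroup B] [Fintype A] [Fintype B]
    [DecidableEq A] [DecidableEq B] (f : A →+ B) (hf : Function.Surjective f) (b : B) :
    (univ.filter fun a => f a = b).card * Fintype.card B = Fintype.card A := by
  have key : ∀ b1 b2 : B, (univ.filter fun a => f a = b1).card
      = (univ.filter fun a => f a = b2).card := by
    intro b1 b2
    obtain ⟨c, hc⟩ := hf (b2 - b1)
    apply Finset.card_bij (fun a _ => a + c)
    · intro a ha
      simp only [mem_filter, mem_univ, true_and] at *
      rw [map_add, ha, hc]; abel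
    · intro a1 h1 a2 h2 h; simpa using h
    · intro a ha
      simp only [mem_filter, mem_univ, true_and] at *
      exact ⟨a - c, by rw [map_sub, ha, hc]; abel, by abel⟩
  have h1 : Fintype.card A = ∑ b2 : B, (univ.filter fun a => f a = b2).card :=
    Finset.card_eq_sum_card_fiberwise (fun a _ => mem_univ (f a))
  rw [h1, Finset.sum_congr rfl (fun b2 _ => key b2 b), Finset.sum_const, smul_eq_mul,
    Finset.card_univ, mul_comm]

lemma trace_sq {K : Type} [Field K] [Fintype K] [CharP K 2] [Algebra (ZMod 2) K] (y : K) :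
    Algebra.trace (ZMod 2) K (y ^ 2) = Algebra.trace (ZMod 2) K y := by
  let e : K ≃ₐ[ZMod 2] K := AlgEquiv.ofRingEquiv (f := frobeniusEquiv K 2)
    (fun x => by
      show frobeniusEquiv K 2 (algebraMap (ZMod 2) K x) = algebraMap (ZMod 2) K x
      rw [frobeniusEquiv_def, ← map_pow]
      congr 1; revert x; decide)
  have : y ^ 2 = e y := rfl
  rw [this, Algebra.trace_eq_of_algEquiv]

lemma AS_count {K : Type} [Field K] [Fintype K] [CharP K 2] [Algebra (ZMod 2) K]
    [DecidableEq K]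
    (hsurj : Function.Surjective (Algebra.trace (ZMod 2) K)) (c : K) :
    (univ.filter fun y : K => y ^ 2 + y = c).card
      = if Algebra.trace (ZMod 2) K c = 0 then 2 else 0 := by
  have h2 : (2 : K) = 0 := by
    have := CharP.cast_eq_zero K 2; push_cast at this; exact this
  have htr : ∀ y : K, Algebra.trace (ZMod 2) K (y ^ 2 + y) = 0 := by
    intro y
    rw [map_add, trace_sq]
    exact CharTwo.add_self_eq_zero _
  have hfib : ∀ c' : K, (∃ y₀ : K, y₀ ^ 2 + y₀ = c') →
      (univ.filter fun y : K => y ^ 2 + y = c').card = 2 := by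
    rintro c' ⟨y₀, hy⟩
    have hset : (univ.filter fun y : K => y ^ 2 + y = c') = {y₀, y₀ + 1} := by
      ext z
      simp only [mem_filter, mem_univ, true_and, mem_insert, mem_singleton]
      constructor
      · intro hz
        have hfac : (z + y₀) * (z + y₀ + 1) = 0 := by
          linear_combination hz - hy + (z * y₀ + y₀ ^ 2 + y₀) * h2
        rcases mul_eq_zero.mp hfac with h | h
        · left; linear_combination h - y₀ * h2
        · right; linear_combination h - (y₀ + 1) * h2
      · rintro (rfl | rfl)
        · exact hy
        · linear_combination hy + (y₀ + 1) * h2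
    rw [hset, Finset.card_insert_of_notMem, Finset.card_singleton]
    simp only [mem_singleton]
    intro h
    have : (1 : K) = 0 := by linear_combination -h
    exact one_ne_zero this
  by_cases hc : Algebra.trace (ZMod 2) K c = 0
  · rw [if_pos hc]
    apply hfib
    by_contra hne
    push_neg at hne
    set φ : K → K := fun y => y ^ 2 + y with hφ
    have himcard : (univ.image φ).card * 2 = Fintype.card K := by
      have hsum := Finset.card_eq_sum_card_fiberwise
        (f := φ) (s := univ) (t := univ.image φ)
        (fun x _ => Finset.mem_image_of_mem φ (mem_univ x))
      rw [Finset.card_univ] at hsum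
      rw [hsum, Finset.sum_congr rfl (fun c' hc' => ?_), Finset.sum_const, smul_eq_mul]
      obtain ⟨y₀, _, hy₀⟩ := Finset.mem_image.mp hc'
      exact hfib c' ⟨y₀, hy₀⟩
    have hkcard : (univ.filter fun z : K => Algebra.trace (ZMod 2) K z = 0).card * 2
        = Fintype.card K := by
      have := fiber_card_mul (Algebra.trace (ZMod 2) K).toAddMonoidHom hsurj 0
      simp [ZMod.card] at this; convert this; ext; simp; exact ⟨fun h => mem_filter.mpr ⟨mem_univ _, h⟩, fun h => (mem_filter.mp h).2⟩
    have hsub : univ.image φ ⊆ univ.filter fun z : K => Algebra.trace (ZMod 2) K z = 0 := by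
      intro z hz
      obtain ⟨y₀, _, hy₀⟩ := Finset.mem_image.mp hz
      exact Finset.mem_filter.mpr ⟨mem_univ z, hy₀ ▸ htr y₀⟩
    have heq : univ.image φ = univ.filter fun z : K => Algebra.trace (ZMod 2) K z = 0 := by
      apply Finset.eq_of_subset_of_card_le hsub
      omega
    have : c ∈ univ.image φ := heq ▸ Finset.mem_filter.mpr ⟨mem_univ c, hc⟩
    obtain ⟨y₀, _, hy₀⟩ := Finset.mem_image.mp this
    exact hne y₀ hy₀
  · rw [if_neg hc]
    rw [Finset.card_eq_zero, Finset.filter_eq_empty_iff]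
    intro y _
    intro hy
    exact hc (hy ▸ htr y)

variable {Fq K : Type} [Field Fq] [Fintype Fq] [DecidableEq Fq] [Field K] [Fintype K]
  [DecidableEq K] [Algebra Fq K]

noncomputable def Acard (Fq K : Type) [Field Fq] [Field K] [Fintype K] [DecidableEq Fq]
    [DecidableEq K] [Algebra Fq K] (s u : Fq) : ℕ :=
  (univ.filter fun x : K => x ≠ 0 ∧ Algebra.trace Fq K x = s
    ∧ Algebra.trace Fq K x⁻¹ = u).card

omit [Fintype Fq] [DecidableEq Fq] [Fintype K] [DecidableEq K] in
lemma trace_alg_mul (d : Fq) (x : K) :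
    Algebra.trace Fq K (algebraMap Fq K d * x) = d * Algebra.trace Fq K x := by
  rw [← Algebra.smul_def, LinearMap.map_smul, smul_eq_mul]

lemma Acard_scale (c : Fq) (hc : c ≠ 0) (s u : Fq) :
    Acard Fq K s u = Acard Fq K (c * s) (c⁻¹ * u) := by
  unfold Acard
  have halg : ∀ d : Fq, d ≠ 0 → (algebraMap Fq K d) ≠ 0 := fun d hd h =>
    hd ((algebraMap Fq K).injective (h.trans (map_zero _).symm))
  apply Finset.card_nbij' (i := fun x => algebraMap Fq K c * x)
    (j := fun x => algebraMap Fq K c⁻¹ * x)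
  · rintro x hx
    simp only [mem_coe, mem_filter, mem_univ, true_and] at *
    obtain ⟨hx0, hxs, hxu⟩ := hx
    refine ⟨mul_ne_zero (halg c hc) hx0, by rw [trace_alg_mul, hxs], ?_⟩
    rw [mul_inv, ← map_inv₀, trace_alg_mul, hxu]
  · rintro x hx
    simp only [mem_coe, mem_filter, mem_univ, true_and] at *
    obtain ⟨hx0, hxs, hxu⟩ := hx
    refine ⟨mul_ne_zero (halg c⁻¹ (inv_ne_zero hc)) hx0, ?_, ?_⟩
    · rw [trace_alg_mul, hxs]; field_simp
    · rw [mul_inv, ← map_inv₀, inv_inv, trace_alg_mul, hxu]; field_simp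
  · intro x _
    dsimp only
    rw [← mul_assoc, ← map_mul]
    field_simp
    rw [map_one, one_mul]
  · intro x _
    dsimp only
    rw [← mul_assoc, ← map_mul]
    field_simp
    rw [map_one, one_mul]

lemma Acard_symm (s u : Fq) : Acard Fq K s u = Acard Fq K u s := by
  unfold Acard
  apply Finset.card_nbij' (i := fun x => x⁻¹) (j := fun x => x⁻¹)
  · rintro x hx
    simp only [mem_coe, mem_filter, mem_univ, true_and] at *
    exact ⟨inv_ne_zero hx.1, hx.2.2, by rw [inv_inv]; exact hx.2.1⟩
  · rintro x hx
    simp only [mem_coe, mem_filter, mem_univ, true_and] at *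
    exact ⟨inv_ne_zero hx.1, hx.2.2, by rw [inv_inv]; exact hx.2.1⟩
  · intro x _; exact inv_inv x
  · intro x _; exact inv_inv x

lemma Acard_row (s : Fq) :
    ∑ u : Fq, Acard Fq K s u
      = (univ.filter fun x : K => x ≠ 0 ∧ Algebra.trace Fq K x = s).card := by
  rw [Finset.card_eq_sum_card_fiberwise
    (f := fun x : K => Algebra.trace Fq K x⁻¹) (t := univ) (fun x _ => mem_univ _)]
  apply Finset.sum_congr rfl
  intro u _
  unfold Acard
  rw [Finset.filter_filter]
  congr 1
  ext x
  simp only [mem_filter, mem_univ, true_and]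
  tauto

lemma sum_sq_reindex {Fq : Type} [Field Fq] [Fintype Fq] [DecidableEq Fq] [CharP Fq 2]
    (g : Fq → ℕ) :
    ∑ s ∈ univ.erase (0 : Fq), g (s * s) = ∑ γ ∈ univ.erase (0 : Fq), g γ := by
  haveI : Fact (Nat.Prime 2) := ⟨Nat.prime_two⟩
  apply Finset.sum_nbij' (i := fun s => s * s) (j := fun γ => (frobeniusEquiv Fq 2).symm γ)
  · intro s hs
    rw [mem_erase] at *
    exact ⟨mul_ne_zero hs.1 hs.1, mem_univ _⟩
  · intro γ hγ
    rw [mem_erase] at *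
    refine ⟨fun h => hγ.1 ?_, mem_univ _⟩
    rw [← frobeniusEquiv_symm_pow_p Fq 2 γ, h]
    norm_num
  · intro s _
    have : s * s = frobeniusEquiv Fq 2 s := by rw [frobeniusEquiv_def]; ring
    rw [this, RingEquiv.symm_apply_apply]
  · intro γ _
    rw [← pow_two]
    exact frobeniusEquiv_symm_pow_p Fq 2 γ
  · intro s _; rfl

lemma sum_units {Fq : Type} [Field Fq] [Fintype Fq] [DecidableEq Fq] (f : Fq → ℤ) :
    ∑ α : Fqˣ, f (α : Fq) = ∑ a ∈ univ.erase (0 : Fq), f a := by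
  refine Finset.sum_bij' (fun (α : Fqˣ) _ => (α : Fq))
    (fun a ha => Units.mk0 a (by simpa using (Finset.mem_erase.mp ha).1)) ?_ ?_ ?_ ?_ ?_
  · intro a _
    exact mem_erase.mpr ⟨a.ne_zero, mem_univ _⟩
  · intro a _; exact mem_univ _
  · intro a _; exact Units.ext rfl
  · intro a _; rfl
  · intro a _; rfl

lemma Nalpha_eq {Fq K : Type} [Field Fq] [Fintype Fq] [DecidableEq Fq] [Field K] [Fintype K]
    [DecidableEq K] [Algebra Fq K] [CharP K 2] [Algebra (ZMod 2) Fq] [Algebra (ZMod 2) K]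
    [IsScalarTower (ZMod 2) Fq K]
    (hsurj : Function.Surjective (Algebra.trace (ZMod 2) K))
    (α : Fq) (hα : α ≠ 0) :
    (Nat.card {xy : K × K // xy.1 * (xy.2 ^ 2 + xy.2)
        = algebraMap Fq K α * (xy.1 ^ 2 + 1)})
      = ∑ x ∈ univ.erase (0 : K), (if Algebra.trace (ZMod 2) Fq
          (α * (Algebra.trace Fq K x + Algebra.trace Fq K x⁻¹)) = 0 then 2 else 0) := by
  have halg : (algebraMap Fq K) α ≠ 0 := fun h =>
    hα ((algebraMap Fq K).injective (h.trans (map_zero _).symm))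
  rw [Nat.card_eq_fintype_card,
    Fintype.card_congr (Equiv.subtypeProdEquivSigmaSubtype
      (fun (x y : K) => x * (y ^ 2 + y) = algebraMap Fq K α * (x ^ 2 + 1))),
    Fintype.card_sigma]
  rw [← Finset.add_sum_erase univ
    (fun x : K => Fintype.card {y : K // x * (y ^ 2 + y) = algebraMap Fq K α * (x ^ 2 + 1)})
    (mem_univ 0)]
  have h0 : Fintype.card {y : K // (0:K) * (y ^ 2 + y) = algebraMap Fq K α * ((0:K) ^ 2 + 1)}
      = 0 := by
    rw [Fintype.card_eq_zero_iff]
    refine ⟨fun ⟨y, hy⟩ => ?_⟩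
    simp only [zero_mul] at hy
    exact halg (by linear_combination -hy)
  rw [h0, zero_add]
  apply Finset.sum_congr rfl
  intro x hx
  have hx0 : x ≠ 0 := (mem_erase.mp hx).1
  rw [Fintype.card_subtype]
  have hpred : ∀ y : K, (x * (y ^ 2 + y) = algebraMap Fq K α * (x ^ 2 + 1))
      ↔ (y ^ 2 + y = algebraMap Fq K α * (x + x⁻¹)) := by
    intro y
    have hxinv : x * x⁻¹ = 1 := mul_inv_cancel₀ hx0
    have key : algebraMap Fq K α * (x ^ 2 + 1) = x * (algebraMap Fq K α * (x + x⁻¹)) := by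
      linear_combination (-(algebraMap Fq K α)) * hxinv
    constructor
    · intro h
      exact mul_left_cancel₀ hx0 (h.trans key)
    · intro h
      rw [h]
      exact key.symm
  rw [Finset.filter_congr (fun y _ => by rw [hpred y]), AS_count hsurj]
  congr 1
  rw [← Algebra.trace_trace (S := Fq), trace_alg_mul, map_add]

end Helpers

/-- Let `q = 2 ^ r` be an even prime power, `n ≥ 1`, `Fq` a field with
`q` elements and `K` an extension of `Fq` of degree `n`.  For nonzero `α ∈ Fq` let `N_α`
be the number of pairs `(x, y) ∈ K × K` with `x·(y² + y) = α·(x² + 1)`.  Then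
`q² · F_q(n,0,0) = q^n + (q − 1) · ∑_{α ∈ Fq, α ≠ 0} (N_α − q^n + 2)`, where
`F_q(n,0,0)` is the number of `a ∈ K` with `Tr(a) = 0` and `Tr(a⁻¹) = 0`
(with the convention `0⁻¹ = 0`), `Tr` being the field trace from `K` to `Fq`. -/
theorem stmt7 (r q n : ℕ) (hr : 1 ≤ r) (hq : q = 2 ^ r) (hn : 1 ≤ n)
    (Fq K : Type) [Field Fq] [Fintype Fq] [DecidableEq Fq] [Field K] [Fintype K] [Algebra Fq K]
    (hFq : Fintype.card Fq = q) (hK : Module.finrank Fq K = n) :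
    (q : ℤ) ^ 2 * (Nat.card {a : K //
        Algebra.trace Fq K a = 0 ∧ Algebra.trace Fq K a⁻¹ = 0} : ℤ) =
    (q : ℤ) ^ n + ((q : ℤ) - 1) * ∑ α : Fqˣ,
      ((Nat.card {xy : K × K // xy.1 * (xy.2 ^ 2 + xy.2) =
          algebraMap Fq K (α : Fq) * (xy.1 ^ 2 + 1)} : ℤ) - (q : ℤ) ^ n + 2) := by
  classical
  -- characteristic 2 instances
  have hcard2 := FiniteField.cast_card_eq_zero Fq
  rw [hFq, hq] at hcard2
  have hdvd : ringChar Fq ∣ 2 ^ r :=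
    (CharP.cast_eq_zero_iff Fq (ringChar Fq) (2 ^ r)).mp hcard2
  have hprime : (ringChar Fq).Prime := CharP.char_is_prime Fq (ringChar Fq)
  have hchar2 : ringChar Fq = 2 :=
    (Nat.prime_dvd_prime_iff_eq hprime Nat.prime_two).mp (hprime.dvd_of_dvd_pow hdvd)
  haveI : CharP Fq 2 := hchar2 ▸ ringChar.charP Fq
  haveI : CharP K 2 := charP_of_injective_algebraMap (algebraMap Fq K).injective 2
  letI : Algebra (ZMod 2) Fq := ZMod.algebra _ _
  letI : Algebra (ZMod 2) K := ZMod.algebra _ _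
  haveI : IsScalarTower (ZMod 2) Fq K := IsScalarTower.of_algebraMap_eq' (RingHom.ext_zmod _ _)
  have tsurjK : Function.Surjective (Algebra.trace (ZMod 2) K) :=
    Algebra.trace_surjective (ZMod 2) K
  have tsurjFq : Function.Surjective (Algebra.trace (ZMod 2) Fq) :=
    Algebra.trace_surjective (ZMod 2) Fq
  -- trace to Fq is surjective
  have hTne : ∃ z : K, Algebra.trace Fq K z ≠ 0 := by
    obtain ⟨w, hw⟩ := tsurjK 1
    refine ⟨w, fun h => ?_⟩
    have := Algebra.trace_trace (R := ZMod 2) (S := Fq) (T := K) w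
    rw [h, map_zero, hw] at this
    exact one_ne_zero this.symm
  have hT : Function.Surjective (Algebra.trace Fq K) := by
    obtain ⟨z, hz⟩ := hTne
    intro s
    refine ⟨(s * (Algebra.trace Fq K z)⁻¹) • z, ?_⟩
    rw [LinearMap.map_smul, smul_eq_mul]
    field_simp
  -- cardinalities
  have hcardK : Fintype.card K = q ^ n := by
    rw [Module.card_eq_pow_finrank (K := Fq) (V := K), hFq, hK]
  have hq1 : 1 ≤ q := by rw [hq]; exact Nat.one_le_two_pow
  have hqh : q = 2 * 2 ^ (r - 1) := by
    have h1 : q = 2 ^ (r - 1 + 1) := by rw [hq]; congr 1; omega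
    rw [h1, pow_succ]; ring
  -- fibre counts of the trace T : K → Fq
  have htf : ∀ s : Fq, (univ.filter fun x : K => Algebra.trace Fq K x = s).card * q = q ^ n := by
    intro s
    have := fiber_card_mul (Algebra.trace Fq K).toAddMonoidHom hT s
    rw [hFq, hcardK] at this
    simp at this; convert this; ext; simp; exact ⟨fun h => mem_filter.mpr ⟨mem_univ _, h⟩, fun h => (mem_filter.mp h).2⟩
  -- erase-zero cardinalities
  have hEFq : (univ.erase (0:Fq)).card + 1 = q := by
    rw [Finset.card_erase_add_one (mem_univ (0:Fq)), Finset.card_univ, hFq]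
  have hEK : (univ.erase (0:K)).card + 1 = q ^ n := by
    rw [Finset.card_erase_add_one (mem_univ (0:K)), Finset.card_univ, hcardK]
  have hUnits : (Fintype.card Fqˣ : ℤ) = (q:ℤ) - 1 := by
    rw [Fintype.card_units, hFq]; omega
  -- row 0
  have hrow0 : Acard Fq K 0 0 + (univ.erase (0:Fq)).card * Acard Fq K 0 1 + 1
      = (univ.filter fun x : K => Algebra.trace Fq K x = 0).card := by
    have h1 : ∑ u : Fq, Acard Fq K 0 u
        = (univ.filter fun x : K => x ≠ 0 ∧ Algebra.trace Fq K x = 0).card := Acard_row 0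
    have h2 : ∑ u : Fq, Acard Fq K 0 u
        = Acard Fq K 0 0 + ∑ u ∈ univ.erase 0, Acard Fq K 0 u :=
      (Finset.add_sum_erase univ _ (mem_univ 0)).symm
    have h3 : ∀ u ∈ univ.erase (0:Fq), Acard Fq K 0 u = Acard Fq K 0 1 := by
      intro u hu
      have hu0 : u ≠ 0 := (mem_erase.mp hu).1
      have := Acard_scale (K := K) u hu0 0 u
      rwa [mul_zero, inv_mul_cancel₀ hu0] at this
    have h4 : (univ.filter fun x : K => x ≠ 0 ∧ Algebra.trace Fq K x = 0)
        = (univ.filter fun x : K => Algebra.trace Fq K x = 0).erase 0 := by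
      ext z
      simp only [mem_filter, mem_erase, mem_univ, true_and]
      try tauto
    have h5 : (0:K) ∈ univ.filter fun x : K => Algebra.trace Fq K x = 0 := by
      simp [map_zero]
    rw [h2, Finset.sum_congr rfl h3, Finset.sum_const, smul_eq_mul] at h1
    rw [h1, h4]
    exact Finset.card_erase_add_one h5
  -- row 1
  have hrow1 : Acard Fq K 0 1 + ∑ u ∈ univ.erase (0:Fq), Acard Fq K u 1
      = (univ.filter fun x : K => Algebra.trace Fq K x = 1).card := by
    have h1 := Acard_row (Fq := Fq) (K := K) 1
    have h2 : ∑ u : Fq, Acard Fq K 1 u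
        = Acard Fq K 1 0 + ∑ u ∈ univ.erase 0, Acard Fq K 1 u :=
      (Finset.add_sum_erase univ _ (mem_univ 0)).symm
    have h3 : (univ.filter fun x : K => x ≠ 0 ∧ Algebra.trace Fq K x = 1)
        = univ.filter fun x : K => Algebra.trace Fq K x = 1 := by
      ext z
      simp only [mem_filter, mem_univ, true_and]
      constructor
      · exact fun h => h.2
      · intro h
        refine ⟨fun h0 => ?_, h⟩
        rw [h0, map_zero] at h
        exact one_ne_zero h.symm
    rw [h2, Finset.sum_congr rfl (fun u hu => Acard_symm 1 u), h3] at h1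
    rw [← h1, Acard_symm 0 1]
  -- diagonal
  have hM0 : ((univ.erase (0:K)).filter
        fun x : K => Algebra.trace Fq K x = Algebra.trace Fq K x⁻¹).card
      = Acard Fq K 0 0 + ∑ u ∈ univ.erase (0:Fq), Acard Fq K u 1 := by
    have hset : (univ.erase (0:K)).filter
          (fun x : K => Algebra.trace Fq K x = Algebra.trace Fq K x⁻¹)
        = univ.filter fun x : K =>
            x ≠ 0 ∧ Algebra.trace Fq K x = Algebra.trace Fq K x⁻¹ := by
      ext z
      simp only [mem_filter, mem_erase, mem_univ, true_and]
      tauto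
    have h1 : (univ.filter fun x : K =>
          x ≠ 0 ∧ Algebra.trace Fq K x = Algebra.trace Fq K x⁻¹).card
        = ∑ s : Fq, Acard Fq K s s := by
      rw [Finset.card_eq_sum_card_fiberwise (f := fun x : K => Algebra.trace Fq K x)
        (t := univ) (fun x _ => mem_univ _)]
      apply Finset.sum_congr rfl
      intro s _
      rw [Finset.filter_filter]
      unfold Acard
      congr 1
      ext x
      simp only [mem_filter, mem_univ, true_and]
      constructor
      · rintro ⟨⟨h0, he⟩, hs⟩
        exact ⟨h0, hs, by rw [← he, hs]⟩
      · rintro ⟨h0, hs, hu⟩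
        exact ⟨⟨h0, by rw [hs, hu]⟩, hs⟩
    have h2 : ∑ s : Fq, Acard Fq K s s
        = Acard Fq K 0 0 + ∑ s ∈ univ.erase 0, Acard Fq K s s :=
      (Finset.add_sum_erase univ _ (mem_univ 0)).symm
    have h3 : ∀ s ∈ univ.erase (0:Fq), Acard Fq K s s = Acard Fq K (s * s) 1 := by
      intro s hs
      have hs0 : s ≠ 0 := (mem_erase.mp hs).1
      have := Acard_scale (K := K) s hs0 s s
      rwa [inv_mul_cancel₀ hs0] at this
    rw [hset, h1, h2, Finset.sum_congr rfl h3, sum_sq_reindex (fun γ => Acard Fq K γ 1)]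
  -- complement split
  have hsplit : ((univ.erase (0:K)).filter
        fun x : K => Algebra.trace Fq K x = Algebra.trace Fq K x⁻¹).card
      + ((univ.erase (0:K)).filter
        fun x : K => ¬(Algebra.trace Fq K x = Algebra.trace Fq K x⁻¹)).card
      = (univ.erase (0:K)).card :=
    Finset.card_filter_add_card_filter_not _
  -- the left-hand-side count
  have hF : Acard Fq K 0 0 + 1
      = Nat.card {a : K // Algebra.trace Fq K a = 0 ∧ Algebra.trace Fq K a⁻¹ = 0} := by
    rw [Nat.card_eq_fintype_card, Fintype.card_subtype]
    have h0mem : (0:K) ∈ univ.filter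
        fun a : K => Algebra.trace Fq K a = 0 ∧ Algebra.trace Fq K a⁻¹ = 0 := by
      simp [map_zero]
    rw [← Finset.card_erase_add_one h0mem]
    congr 1
    unfold Acard
    congr 1
    ext z
    simp only [mem_filter, mem_erase, mem_univ, true_and]
    try tauto
  -- the inner character sum over α
  have hinner : ∀ v : Fq, (∑ α : Fqˣ,
      (if Algebra.trace (ZMod 2) Fq ((α:Fq) * v) = 0 then (2:ℤ) else 0))
      = if v = 0 then 2 * ((q:ℤ) - 1) else 2 * ((2 ^ (r-1) : ℕ) : ℤ) - 2 := by
    intro v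
    rw [sum_units (fun a => if Algebra.trace (ZMod 2) Fq (a * v) = 0 then (2:ℤ) else 0),
      Finset.sum_ite, Finset.sum_const, Finset.sum_const, nsmul_eq_mul, nsmul_eq_mul,
      mul_zero, add_zero]
    by_cases hv : v = 0
    · rw [if_pos hv]
      have hall : (univ.erase (0:Fq)).filter
          (fun a => Algebra.trace (ZMod 2) Fq (a * v) = 0) = univ.erase 0 := by
        apply Finset.filter_true_of_mem
        intro a _
        rw [hv, mul_zero, map_zero]
      rw [hall]
      omega
    · rw [if_neg hv]
      set kv := univ.filter (fun a : Fq => Algebra.trace (ZMod 2) Fq (a * v) = 0) with hkv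
      have hker : kv.card * 2 = q := by
        have hs : Function.Surjective
            ((Algebra.trace (ZMod 2) Fq).toAddMonoidHom.comp (AddMonoidHom.mulRight v)) := by
          intro b
          obtain ⟨a, ha⟩ := tsurjFq b
          refine ⟨a * v⁻¹, ?_⟩
          simp only [AddMonoidHom.coe_comp, Function.comp_apply, AddMonoidHom.coe_mulRight,
            LinearMap.toAddMonoidHom_coe]
          rw [mul_assoc, inv_mul_cancel₀ hv, mul_one, ha]
        have := fiber_card_mul _ hs 0
        rw [ZMod.card, hFq] at this
        simp [hkv] at this; convert this; ext; simp [hkv]; exact ⟨fun h => mem_filter.mpr ⟨mem_univ _, h⟩, fun h => (mem_filter.mp h).2⟩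
      have h0kv : (0:Fq) ∈ kv := by simp [hkv, map_zero]
      have herase : (univ.erase (0:Fq)).filter
          (fun a => Algebra.trace (ZMod 2) Fq (a * v) = 0) = kv.erase 0 := by
        ext a
        simp only [hkv, mem_filter, mem_erase, mem_univ, true_and]
        tauto
      have hc := Finset.card_erase_add_one h0kv
      rw [herase]
      omega
  -- total sum over α
  have hSum : ∑ α : Fqˣ, (Nat.card {xy : K × K // xy.1 * (xy.2 ^ 2 + xy.2) =
          algebraMap Fq K (α : Fq) * (xy.1 ^ 2 + 1)} : ℤ)
      = 2 * ((q:ℤ) - 1) * (((univ.erase (0:K)).filter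
          fun x : K => Algebra.trace Fq K x = Algebra.trace Fq K x⁻¹).card : ℤ)
        + (2 * ((2 ^ (r-1) : ℕ) : ℤ) - 2) * (((univ.erase (0:K)).filter
          fun x : K => ¬(Algebra.trace Fq K x = Algebra.trace Fq K x⁻¹)).card : ℤ) := by
    have hNα : ∀ α : Fqˣ, (Nat.card {xy : K × K // xy.1 * (xy.2 ^ 2 + xy.2) =
          algebraMap Fq K (α : Fq) * (xy.1 ^ 2 + 1)} : ℤ)
        = ∑ x ∈ univ.erase (0:K), (if Algebra.trace (ZMod 2) Fq
            ((α:Fq) * (Algebra.trace Fq K x + Algebra.trace Fq K x⁻¹)) = 0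
            then (2:ℤ) else 0) := by
      intro α
      rw [Nalpha_eq tsurjK (α:Fq) α.ne_zero]
      push_cast [apply_ite (fun m : ℕ => (m : ℤ))]
      rfl
    have hcond : ∀ x : K, ((Algebra.trace Fq K x + Algebra.trace Fq K x⁻¹ = 0)
        ↔ (Algebra.trace Fq K x = Algebra.trace Fq K x⁻¹)) := fun x => by
      rw [add_eq_zero_iff_eq_neg, CharTwo.neg_eq]
    calc ∑ α : Fqˣ, (Nat.card {xy : K × K // xy.1 * (xy.2 ^ 2 + xy.2) =
          algebraMap Fq K (α : Fq) * (xy.1 ^ 2 + 1)} : ℤ)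
        = ∑ α : Fqˣ, ∑ x ∈ univ.erase (0:K), (if Algebra.trace (ZMod 2) Fq
            ((α:Fq) * (Algebra.trace Fq K x + Algebra.trace Fq K x⁻¹)) = 0
            then (2:ℤ) else 0) := Finset.sum_congr rfl (fun α _ => hNα α)
      _ = ∑ x ∈ univ.erase (0:K), ∑ α : Fqˣ, (if Algebra.trace (ZMod 2) Fq
            ((α:Fq) * (Algebra.trace Fq K x + Algebra.trace Fq K x⁻¹)) = 0
            then (2:ℤ) else 0) := Finset.sum_comm
      _ = ∑ x ∈ univ.erase (0:K), (if Algebra.trace Fq K x = Algebra.trace Fq K x⁻¹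
            then 2 * ((q:ℤ) - 1) else 2 * ((2 ^ (r-1) : ℕ) : ℤ) - 2) := by
          refine Finset.sum_congr rfl (fun x _ => ?_)
          rw [hinner (Algebra.trace Fq K x + Algebra.trace Fq K x⁻¹)]
          simp only [hcond x]
      _ = _ := by
          rw [Finset.sum_ite, Finset.sum_const, Finset.sum_const,
            nsmul_eq_mul, nsmul_eq_mul]
          ring
  -- final bookkeeping
  rw [← hF]
  have hgoal : ∑ α : Fqˣ, ((Nat.card {xy : K × K // xy.1 * (xy.2 ^ 2 + xy.2) =
          algebraMap Fq K (α : Fq) * (xy.1 ^ 2 + 1)} : ℤ) - (q : ℤ) ^ n + 2)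
      = (∑ α : Fqˣ, (Nat.card {xy : K × K // xy.1 * (xy.2 ^ 2 + xy.2) =
          algebraMap Fq K (α : Fq) * (xy.1 ^ 2 + 1)} : ℤ))
        + (Fintype.card Fqˣ : ℤ) * (2 - (q : ℤ) ^ n) := by
    have hsplitterm : ∀ α : Fqˣ, (Nat.card {xy : K × K // xy.1 * (xy.2 ^ 2 + xy.2) =
          algebraMap Fq K (α : Fq) * (xy.1 ^ 2 + 1)} : ℤ) - (q : ℤ) ^ n + 2
        = (Nat.card {xy : K × K // xy.1 * (xy.2 ^ 2 + xy.2) =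
          algebraMap Fq K (α : Fq) * (xy.1 ^ 2 + 1)} : ℤ) + (2 - (q : ℤ) ^ n) :=
      fun α => by ring
    rw [Finset.sum_congr rfl (fun α _ => hsplitterm α), Finset.sum_add_distrib,
      Finset.sum_const, nsmul_eq_mul, Finset.card_univ]
  rw [hgoal, hUnits, hSum]
  -- cast all the numeric relations to ℤ and finish
  have z1 : ((univ.filter fun x : K => Algebra.trace Fq K x = 0).card : ℤ) * (q:ℤ)
      = (q:ℤ) ^ n := by exact_mod_cast htf 0
  have z2 : ((univ.filter fun x : K => Algebra.trace Fq K x = 1).card : ℤ) * (q:ℤ)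
      = (q:ℤ) ^ n := by exact_mod_cast htf 1
  have hE' : (((univ.erase (0:Fq)).card : ℕ) : ℤ) = (q:ℤ) - 1 := by
    have := hEFq; omega
  have z3 : (Acard Fq K 0 0 : ℤ) + ((q:ℤ) - 1) * (Acard Fq K 0 1 : ℤ) + 1
      = ((univ.filter fun x : K => Algebra.trace Fq K x = 0).card : ℤ) := by
    have h := hrow0
    zify at h
    rw [hE'] at h
    exact h
  have z4 : Acard Fq K 0 1 + (∑ u ∈ univ.erase (0:Fq), Acard Fq K u 1)
      = (univ.filter fun x : K => Algebra.trace Fq K x = 1).card := hrow1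
  have z5 := hM0
  have z6 := hsplit
  have z7 := hEK
  have z8 := hqh
  zify at z4 z5 z6 z7 z8
  push_cast at z1 z2 z3 z4 z5 z6 z7 z8 ⊢
  linear_combination z1 - ((q:ℤ)-1)*z2 + (q:ℤ)*z3 - ((q:ℤ)-1)*(q:ℤ)*z4
    - ((q:ℤ)-1)*(q:ℤ)*z5 - 2*((q:ℤ)-1)*((2:ℤ)^(r-1)-1)*z6
    - 2*((q:ℤ)-1)*((2:ℤ)^(r-1)-1)*z7
    + (-((q:ℤ)-1)*((((univ.erase (0:K)).filter
        fun x : K => Algebra.trace Fq K x = Algebra.trace Fq K x⁻¹).card : ℤ))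
      - ((q:ℤ)-1)*(1-(q:ℤ)^n))*z8
end

section
/- The number of elements a ∈ F_{4^5} (the field with 4^5 = 1024 elements) such that Tr(a) = 0 and Tr(a⁻¹) = 0, where Tr denotes the field trace from F_{4^5} to F_4 and by convention 0⁻¹ = 0, equals 31. That is, F_4(5,0,0) = 31. -/
open Polynomial
open Polynomial

def addL : List (ZMod 2) → List (ZMod 2) → List (ZMod 2)
  | [], q => q
  | p, [] => p
  | a::p, b::q => (a+b) :: addL p q
def mulL : List (ZMod 2) → List (ZMod 2) → List (ZMod 2)
  | [], _ => []
  | a::p, q => addL (q.map (a * ·)) ((0:ZMod 2) :: mulL p q)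

variable (K : Type) [Field K] [CharP K 2]

noncomputable def LP (l : List (ZMod 2)) : Polynomial K :=
  l.foldr (fun c p => Polynomial.C ((ZMod.castHom (dvd_refl 2) K) c) + Polynomial.X * p) 0

@[simp] theorem LP_nil : LP K [] = 0 := rfl
theorem LP_cons (c : ZMod 2) (l : List (ZMod 2)) :
    LP K (c :: l) = C ((ZMod.castHom (dvd_refl 2) K) c) + X * LP K l := rfl

theorem LP_addL (p q : List (ZMod 2)) : LP K (addL p q) = LP K p + LP K q := by
  induction p generalizing q with
  | nil => simp [addL]
  | cons a p ih =>
    cases q with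
    | nil => simp [addL]
    | cons b q => simp only [addL, LP_cons, ih, map_add]; ring

theorem LP_smul (c : ZMod 2) (l : List (ZMod 2)) :
    LP K (l.map (c * ·)) = C ((ZMod.castHom (dvd_refl 2) K) c) * LP K l := by
  induction l with
  | nil => simp
  | cons a l ih => simp only [List.map_cons, LP_cons, ih, map_mul]; ring

theorem LP_mulL (p q : List (ZMod 2)) : LP K (mulL p q) = LP K p * LP K q := by
  induction p with
  | nil => simp [mulL]
  | cons a p ih =>
    show LP K (addL (q.map (a * ·)) ((0:ZMod 2) :: mulL p q)) = _
    rw [LP_addL, LP_smul, LP_cons, ih, LP_cons]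
    simp only [map_zero, Polynomial.C_0, zero_add]
    ring

theorem LP_pad (l : List (ZMod 2)) (n : ℕ) : LP K (l ++ List.replicate n 0) = LP K l := by
  induction l with
  | nil =>
    simp only [List.nil_append, LP_nil]
    induction n with
    | zero => rfl
    | succ n ih => simpa [List.replicate_succ, LP_cons] using ih
  | cons a l ih => simp [LP_cons, ih]

def Pl : List (ZMod 2) := [0,1,0,0,1,0,0,0,0,0,0,0,0,0,0,0,1,0,0,0,0,0,0,0,0,0,0,0,0,0,0,0,0,0,0,0,0,0,0,0,0,0,0,0,0,0,0,0,0,0,0,0,0,0,0,0,0,0,0,0,0,0,0,0,1,0,0,0,0,0,0,0,0,0,0,0,0,0,0,0,0,0,0,0,0,0,0,0,0,0,0,0,0,0,0,0,0,0,0,0,0,0,0,0,0,0,0,0,0,0,0,0,0,0,0,0,0,0,0,0,0,0,0,0,0,0,0,0,0,0,0,0,0,0,0,0,0,0,0,0,0,0,0,0,0,0,0,0,0,0,0,0,0,0,0,0,0,0,0,0,0,0,0,0,0,0,0,0,0,0,0,0,0,0,0,0,0,0,0,0,0,0,0,0,0,0,0,0,0,0,0,0,0,0,0,0,0,0,0,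0,0,0,0,0,0,0,0,0,0,0,0,0,0,0,0,0,0,0,0,0,0,0,0,0,0,0,0,0,0,0,0,0,0,0,0,0,0,0,0,0,0,0,0,0,0,0,0,0,0,0,0,0,0,0,0,0,1]
def Ql : List (ZMod 2) := [1,0,0,0,0,0,0,0,0,0,0,0,0,0,0,0,0,0,0,0,0,0,0,0,0,0,0,0,0,0,0,0,0,0,0,0,0,0,0,0,0,0,0,0,0,0,0,0,0,0,0,0,0,0,0,0,0,0,0,0,0,0,0,0,0,0,0,0,0,0,0,0,0,0,0,0,0,0,0,0,0,0,0,0,0,0,0,0,0,0,0,0,0,0,0,0,0,0,0,0,0,0,0,0,0,0,0,0,0,0,0,0,0,0,0,0,0,0,0,0,0,0,0,0,0,0,0,0,0,0,0,0,0,0,0,0,0,0,0,0,0,0,0,0,0,0,0,0,0,0,0,0,0,0,0,0,0,0,0,0,0,0,0,0,0,0,0,0,0,0,0,0,0,0,0,0,0,0,0,0,0,0,0,0,0,0,0,0,0,0,0,0,1,0,0,0,0,0,0,0,0,0,0,0,0,0,0,0,0,0,0,0,0,0,0,0,0,0,0,0,0,0,0,0,0,0,0,0,0,0,0,0,0,0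,0,0,0,0,0,0,1,0,0,0,0,0,0,0,0,0,0,0,1,0,0,1]
def Gl : List (ZMod 2) := [1,0,0,1,0,0,0,0,0,1,0,0,1,0,0,1,0,0,1,0,0,1,0,0,0,0,0,1,0,0,1]
def P1l : List (ZMod 2) := [0,1,0,0,0,0,0,0,0,0,1,0,0,0,0,0,0,0,0,0,0,0,0,0,0,1,0,0,1,0,0,1,0,0,0,0,0,1,0,0,1,0,0,0,0,0,0,0,0,0,0,0,0,0,0,0,0,0,0,0,0,0,0,0,0,0,0,0,0,0,1,0,0,1,0,0,1,0,0,0,0,0,0,0,0,1,0,0,0,0,0,1,0,0,0,0,0,1,0,0,1,0,0,1,0,0,1,0,0,0,0,0,1,0,0,0,0,0,1,0,0,0,0,0,0,0,0,1,0,0,1,0,0,1,0,0,0,0,0,0,0,0,0,0,0,0,0,0,0,0,0,0,0,0,0,0,0,0,0,0,0,0,0,1,0,0,1,0,0,1,0,0,0,0,0,0,0,0,1,0,0,0,0,0,1,0,0,0,0,0,1,0,0,1,0,0,1,0,0,1,0,0,0,0,0,1,0,0,0,0,0,1,0,0,0,0,0,0,0,0,1,0,0,1,0,0,1]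
def Q1l : List (ZMod 2) := [1,0,0,1,0,0,1,0,0,0,0,0,0,0,0,1,0,0,0,0,0,1,0,0,0,0,0,1,0,0,1,0,0,1,0,0,1,0,0,0,0,0,1,0,0,0,0,0,1,0,0,0,0,0,0,0,0,1,0,0,1,0,0,1,0,0,0,0,0,0,0,0,0,0,0,0,0,0,0,0,0,0,0,0,0,0,0,0,0,0,0,0,0,1,0,0,1,0,0,1,0,0,0,0,0,0,0,0,1,0,0,0,0,0,1,0,0,0,0,0,1,0,0,1,0,0,1,0,0,1,0,0,0,0,0,1,0,0,0,0,0,1,0,0,0,0,0,0,0,0,1,0,0,1,0,0,1,0,0,0,0,0,0,0,0,0,0,0,0,0,0,0,0,0,0,0,0,0,0,0,0,0,0,0,0,0,1,0,0,1,0,0,0,0,0,1,0,0,1,0,0,1,0,0,0,0,0,0,0,0,0,0,0,0,0,0,1,0,0,0,0,0,0,0,0,1]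
def Al : List (ZMod 2) := [0,0,1,0,0,1,0,0,1,0,0,0,0,0,1,0,0,0,0,0,0,0,0,1,0,0,0,0,0,0,0,0,1,0,0,1,0,0,0,0,0,0,0,0,0,0,0,1,0,0,0,0,0,1,0,0,1,0,0,0,0,0,1,0,0,0,0,0,1,0,0,1,0,0,0,0,0,0,0,0,0,0,0,0,0,0,0,0,0,0,0,0,1,0,0,1,0,0,1,0,0,0,0,0,0,0,0,0,0,0,1,0,0,1,0,0,1,0,0,0,0,0,0,0,0,1,0,0,1,0,0,0,0,0,1,0,0,0,0,0,0,0,0,1,0,0,1,0,0,1,0,0,0,0,0,1,0,0,1,0,0,1,0,0,0,0,0,1,0,0,0,0,0,0,0,0,0,0,0,0,0,0,1,0,0,1,0,0,0,0,0,1,0,0,0,0,0,1,0,0,0,0,0,1,0,0,0,0,0,0,0,0,1,0,0,1,0,0,0,0,0,0,0,0,1]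
def Bl : List (ZMod 2) := [1,0,0,0,0,0,0,0,0,1,0,0,0,0,0,0,0,0,1,0,0,0,0,0,0,0,0,0,0,0,0,0,0,1,0,0,0,0,0,0,0,0,0,0,0,0,0,0,0,0,0,0,0,0,1,0,0,0,0,0,1,0,0,0,0,0,0,0,0,1,0,0,0,0,0,1,0,0,0,0,0,0,0,0,1,0,0,0,0,0,0,0,0,1,0,0,1,0,0,1,0,0,1,0,0,0,0,0,1,0,0,1,0,0,1,0,0,1,0,0,0,0,0,0,0,0,1,0,0,1,0,0,1,0,0,0,0,0,1,0,0,1,0,0,0,0,0,0,0,0,1,0,0,1,0,0,0,0,0,0,0,0,0,0,0,0,0,0,1,0,0,0,0,0,0,0,0,0,0,0,1,0,0,0,0,0,0,0,0,0,0,0,1,0,0,1,0,0,1,0,0,1,0,0,1,0,0,1,0,0,0,0,0,1,0,0,0,0,0,1,0,0,1,0,0,1]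

section Abstract
variable (F4 K : Type) [Field F4] [Fintype F4] [Field K] [Fintype K] [Algebra F4 K]

theorem charK2 (h4 : Fintype.card F4 = 4) (h5 : Module.finrank F4 K = 5) : CharP K 2 := by
  have cardK : Fintype.card K = 1024 := by
    rw [Module.card_eq_pow_finrank (K := F4) (V := K), h4, h5]; norm_num
  haveI := ringChar.charP K
  obtain ⟨n, hp, hcard⟩ := FiniteField.card K (ringChar K)
  have h2 : ringChar K = 2 := by
    have hdvd : ringChar K ∣ 2 ^ 10 := by
      have h' : ringChar K ∣ Fintype.card K := by
        rw [hcard]; exact dvd_pow_self _ n.ne_zero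
      rw [cardK] at h'; exact_mod_cast h'
    have := hp.dvd_of_dvd_pow (n := 10) hdvd
    exact (Nat.prime_dvd_prime_iff_eq hp Nat.prime_two).mp this
  rw [← h2]; exact ringChar.charP K

theorem frob_distinct (h4 : Fintype.card F4 = 4) (h5 : Module.finrank F4 K = 5)
    (d : ℕ) (hd0 : 0 < d) (hd4 : d ≤ 4) : ¬ (∀ x : K, x ^ (4 ^ d) = x) := by
  intro h
  classical
  have cardK : Fintype.card K = 1024 := by
    rw [Module.card_eq_pow_finrank (K := F4) (V := K), h4, h5]; norm_num
  obtain ⟨g, hg⟩ := IsCyclic.exists_generator (α := Kˣ)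
  have hord : orderOf g = 1023 := by
    rw [orderOf_eq_card_of_forall_mem_zpowers hg, Nat.card_eq_fintype_card,
      Fintype.card_units, cardK]
  have hgpow : g ^ (4 ^ d) = g := by
    ext
    push_cast
    exact h g
  have hone : g ^ (4 ^ d - 1) = 1 := by
    have h1 : g ^ (4 ^ d - 1) * g = 1 * g := by
      rw [← pow_succ, Nat.sub_add_cancel (Nat.one_le_pow _ _ (by norm_num)), hgpow, one_mul]
    exact mul_right_cancel h1
  have hdvd : 1023 ∣ 4 ^ d - 1 := hord ▸ orderOf_dvd_of_pow_eq_one hone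
  have hle : 1023 ≤ 4 ^ d - 1 := Nat.le_of_dvd (by
    have : 4 ^ 1 ≤ 4 ^ d := Nat.pow_le_pow_right (by norm_num) hd0
    omega) hdvd
  have : 4 ^ d ≤ 4 ^ 4 := Nat.pow_le_pow_right (by norm_num) hd4
  norm_num at this
  omega

theorem trace_formula (h4 : Fintype.card F4 = 4) (h5 : Module.finrank F4 K = 5) (x : K) :
    algebraMap F4 K (Algebra.trace F4 K x) = x + x ^ 4 + x ^ 16 + x ^ 64 + x ^ 256 := by
  haveI : CharP K 2 := charK2 F4 K h4 h5
  haveI : Fact (Nat.Prime 2) := ⟨Nat.prime_two⟩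
  -- the Frobenius x ↦ x^4 as an F4-algebra automorphism
  let fr : K →ₐ[F4] K :=
    { toRingHom := (frobenius K 2).comp (frobenius K 2)
      commutes' := fun c => by
        show (algebraMap F4 K c ^ 2) ^ 2 = algebraMap F4 K c
        rw [← pow_mul]
        norm_num
        rw [← map_pow, show c ^ 4 = c from h4 ▸ FiniteField.pow_card c] }
  have hfr : ∀ x : K, fr x = x ^ 4 := fun x => by
    show (x ^ 2) ^ 2 = x ^ 4
    ring
  let σ : K ≃ₐ[F4] K := AlgEquiv.ofBijective fr
    ((Finite.injective_iff_bijective).mp (fr.toRingHom.injective))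
  have hσ : ∀ x : K, σ x = x ^ 4 := hfr
  have hσpow : ∀ (i : ℕ) (x : K), (σ ^ i) x = x ^ 4 ^ i := by
    intro i
    induction i with
    | zero => intro x; simp
    | succ i ih =>
      intro x
      rw [pow_succ', AlgEquiv.mul_apply, hσ, ih, ← pow_mul, pow_succ']
      ring_nf
  have hcardAut : Fintype.card (K ≃ₐ[F4] K) = 5 := by
    rw [← Nat.card_eq_fintype_card, IsGalois.card_aut_eq_finrank, h5]
  have hσord : orderOf σ = 5 := by
    have hdvd : orderOf σ ∣ 5 := hcardAut ▸ orderOf_dvd_card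
    rcases (Nat.prime_five.eq_one_or_self_of_dvd _ hdvd) with h1 | h5'
    · exfalso
      have : σ = 1 := orderOf_eq_one_iff.mp h1
      exact frob_distinct F4 K h4 h5 1 one_pos (by norm_num)
        (fun x => by simpa [hσ] using (DFunLike.congr_fun this x : σ x = x))
    · exact h5'
  -- i ↦ σ^i is a bijection Fin 5 ≃ Aut
  let e : Fin 5 → (K ≃ₐ[F4] K) := fun i => σ ^ (i : ℕ)
  have he : Function.Bijective e := by
    rw [Fintype.bijective_iff_injective_and_card]
    refine ⟨fun i j hij => ?_, by rw [hcardAut, Fintype.card_fin]⟩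
    have := pow_injOn_Iio_orderOf (x := σ)
      (by rw [hσord]; exact Set.mem_Iio.mpr i.isLt)
      (by rw [hσord]; exact Set.mem_Iio.mpr j.isLt) hij
    exact Fin.ext this
  rw [trace_eq_sum_automorphisms, ← Function.Bijective.sum_comp he (fun τ => τ x)]
  show ∑ i : Fin 5, (σ ^ (i : ℕ)) x = _
  rw [Fin.sum_univ_five]
  simp only [hσpow]
  norm_num [show ((3:Fin 5):ℕ) = 3 from rfl, show ((4:Fin 5):ℕ) = 4 from rfl]
end Abstract

set_option maxRecDepth 1000000

theorem list_h1 : mulL Gl P1l = Pl := by decide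
theorem list_h2 : mulL Gl Q1l = Ql := by decide
set_option maxHeartbeats 4000000 in
theorem list_h3 : addL (mulL Al Pl) (mulL Bl Ql) = Gl ++ List.replicate 450 0 := by decide

section NiceForms
variable (K : Type) [Field K] [CharP K 2]

theorem hGnice : LP K Gl = X^30+X^27+X^21+X^18+X^15+X^12+X^9+X^3+1 := by
  simp only [Gl, LP_cons, LP_nil, map_zero, map_one, Polynomial.C_0, Polynomial.C_1, zero_add,
    add_zero, mul_zero]
  ring
theorem hPnice : LP K Pl = X^256+X^64+X^16+X^4+X := by
  simp only [Pl, LP_cons, LP_nil, map_zero, map_one, Polynomial.C_0, Polynomial.C_1, zero_add,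
    add_zero, mul_zero]
  ring
theorem hQnice : LP K Ql = X^255+X^252+X^240+X^192+1 := by
  simp only [Ql, LP_cons, LP_nil, map_zero, map_one, Polynomial.C_0, Polynomial.C_1, zero_add,
    add_zero, mul_zero]
  ring
end NiceForms

/-- `F_4(5,0,0) = 31`: for `F4` the field with `4` elements and `K` an
extension of `F4` of degree `5` (so `K` has `4^5 = 1024` elements), the number of `a ∈ K`
with `Tr(a) = 0` and `Tr(a⁻¹) = 0` equals `31`, where `Tr` is the field trace from `K` to
`F4` and `0⁻¹ = 0` by convention. -/
theorem stmt11 (F4 K : Type) [Field F4] [Fintype F4] [Field K] [Fintype K] [Algebra F4 K]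
    (h4 : Fintype.card F4 = 4) (h5 : Module.finrank F4 K = 5) :
    Nat.card {a : K // Algebra.trace F4 K a = 0 ∧ Algebra.trace F4 K a⁻¹ = 0} = 31 := by
  classical
  haveI : CharP K 2 := charK2 F4 K h4 h5
  -- trace vanishing in terms of the Frobenius-power sum
  have htr0 : ∀ x : K, Algebra.trace F4 K x = 0 ↔ x + x^4 + x^16 + x^64 + x^256 = 0 := by
    intro x
    rw [← trace_formula F4 K h4 h5 x]
    constructor
    · intro h; rw [h, map_zero]
    · intro h
      exact (algebraMap F4 K).injective (by rw [h, map_zero])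
  set Pk : Polynomial K := LP K Pl with hPk
  set Qk : Polynomial K := LP K Ql with hQk
  set Gk : Polynomial K := LP K Gl with hGk
  have hPdeg : Pk.natDegree = 256 := by rw [hPk, hPnice]; compute_degree!
  have hPne : Pk ≠ 0 := fun h => by simp [h] at hPdeg
  have hGdeg : Gk.natDegree = 30 := by rw [hGk, hGnice]; compute_degree!
  have hGne : Gk ≠ 0 := fun h => by simp [h] at hGdeg
  have hPeval : ∀ a : K, Pk.eval a = a + a^4 + a^16 + a^64 + a^256 := by
    intro a; rw [hPk, hPnice]; simp; ring
  have hQeval : ∀ a : K, Qk.eval a = a^255 + a^252 + a^240 + a^192 + 1 := by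
    intro a; rw [hQk, hQnice]; simp
  -- derivative of Pk is 1, so Pk is separable
  have hcast : ∀ n : ℕ, 2 ∣ n → ((n : ℕ) : K) = 0 := fun n hn =>
    (CharP.cast_eq_zero_iff K 2 n).mpr hn
  have hPder : Polynomial.derivative Pk = 1 := by
    rw [hPk, hPnice]
    simp only [Polynomial.derivative_add, Polynomial.derivative_X_pow, Polynomial.derivative_X]
    rw [hcast 256 (by norm_num), hcast 64 (by norm_num), hcast 16 (by norm_num),
      hcast 4 (by norm_num)]
    simp
  have hPsep : Pk.Separable := by
    rw [Polynomial.separable_def, hPder]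
    exact isCoprime_one_right
  -- Pk has 256 distinct roots, hence splits
  have hkercard : Nat.card {x : K | Algebra.trace F4 K x = 0} = 256 := by
    haveI : IsGalois F4 K := inferInstance
    have hsurj := Algebra.trace_surjective F4 K
    have hrank := LinearMap.finrank_range_add_finrank_ker (Algebra.trace F4 K)
    rw [LinearMap.range_eq_top.mpr hsurj, finrank_top, Module.finrank_self, h5] at hrank
    have hker4 : Module.finrank F4 (LinearMap.ker (Algebra.trace F4 K)) = 4 := by omega
    haveI : Fintype (LinearMap.ker (Algebra.trace F4 K)) := Fintype.ofFinite _
    have hc : Nat.card (LinearMap.ker (Algebra.trace F4 K)) = 256 := by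
      rw [Nat.card_eq_fintype_card, Module.card_eq_pow_finrank (K := F4), hker4, h4]
      norm_num
    have hseteq : {x : K | Algebra.trace F4 K x = 0} =
        (LinearMap.ker (Algebra.trace F4 K) : Set K) := by
      ext x; simp [LinearMap.mem_ker]
    rw [hseteq]
    exact hc
  have hroots : Pk.roots.card = 256 := by
    set Zs : Set K := {x : K | Algebra.trace F4 K x = 0} with hZs
    have hZfin : Zs.Finite := Set.toFinite _
    have hZcard : hZfin.toFinset.card = 256 := by
      rw [← Set.ncard_eq_toFinset_card Zs hZfin, ← Nat.card_coe_set_eq]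
      exact hkercard
    have hsub : hZfin.toFinset ⊆ Pk.roots.toFinset := by
      intro a ha
      rw [Set.Finite.mem_toFinset] at ha
      rw [Multiset.mem_toFinset, Polynomial.mem_roots hPne]
      show Pk.eval a = 0
      rw [hPeval]
      exact (htr0 a).mp ha
    have h1 : (256 : ℕ) ≤ Pk.roots.toFinset.card := hZcard ▸ Finset.card_le_card hsub
    have h2 : Pk.roots.toFinset.card ≤ Pk.roots.card := Multiset.toFinset_card_le _
    have h3 : Pk.roots.card ≤ 256 := hPdeg ▸ Pk.card_roots'
    omega
  have hPsplits : Polynomial.Splits Pk :=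
    (Polynomial.splits_iff_card_roots).mpr (by rw [hroots, hPdeg])
  -- Gk divides Pk and Qk
  have hGP : Gk ∣ Pk := ⟨LP K P1l, by rw [hGk, ← LP_mulL, list_h1, hPk]⟩
  have hGQ : Gk ∣ Qk := ⟨LP K Q1l, by rw [hGk, ← LP_mulL, list_h2, hQk]⟩
  have hGsep : Gk.Separable := hPsep.of_dvd hGP
  have hGsplits : Polynomial.Splits Gk :=
    hPsplits.of_dvd hPne hGP
  have hGroot : Fintype.card (Gk.rootSet K) = 30 := by
    rw [Polynomial.card_rootSet_eq_natDegree hGsep (by rwa [Algebra.algebraMap_self, Polynomial.map_id]), hGdeg]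
  -- Bezout identity
  have hBezid : LP K Al * Pk + LP K Bl * Qk = Gk := by
    rw [hPk, hQk, hGk, ← LP_mulL, ← LP_mulL, ← LP_addL, list_h3, LP_pad]
  have hBez : ∀ a : K, Pk.eval a = 0 → Qk.eval a = 0 → Gk.eval a = 0 := by
    intro a hp hq
    have := congrArg (Polynomial.eval a) hBezid
    simpa [hp, hq] using this.symm
  -- relation between Qk and traces of inverses
  have hQrel : ∀ a : K, a ≠ 0 →
      (Qk.eval a = 0 ↔ a⁻¹ + (a⁻¹)^4 + (a⁻¹)^16 + (a⁻¹)^64 + (a⁻¹)^256 = 0) := by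
    intro a ha
    have h1 : a * a⁻¹ = 1 := mul_inv_cancel₀ ha
    have key : a ^ 256 * (a⁻¹ + (a⁻¹)^4 + (a⁻¹)^16 + (a⁻¹)^64 + (a⁻¹)^256) = Qk.eval a := by
      rw [hQeval]
      calc a ^ 256 * (a⁻¹ + a⁻¹^4 + a⁻¹^16 + a⁻¹^64 + a⁻¹^256)
          = (a*a⁻¹)*a^255 + (a*a⁻¹)^4*a^252 + (a*a⁻¹)^16*a^240 + (a*a⁻¹)^64*a^192
            + (a*a⁻¹)^256 := by ring
        _ = a^255 + a^252 + a^240 + a^192 + 1 := by rw [h1]; norm_num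
    rw [← key, mul_eq_zero]
    have : a ^ 256 ≠ 0 := pow_ne_zero _ ha
    exact or_iff_right this
  -- 0 is not a root of Qk (and hence not of Gk)
  have hQ0 : Qk.eval 0 = 1 := by rw [hQeval]; norm_num
  have hG0 : Gk.eval 0 ≠ 0 := by
    intro h
    obtain ⟨c, hc⟩ := hGQ
    rw [hc, Polynomial.eval_mul, h, zero_mul] at hQ0
    exact one_ne_zero hQ0.symm
  have haeval : ∀ (p : Polynomial K) (a : K), Polynomial.aeval a p = p.eval a := fun p a => by
    rw [Polynomial.aeval_def, Polynomial.eval₂_eq_eval_map, Algebra.algebraMap_self,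
      Polynomial.map_id]
  -- the set identification
  have hSet : {a : K | Algebra.trace F4 K a = 0 ∧ Algebra.trace F4 K a⁻¹ = 0} =
      insert (0 : K) (Gk.rootSet K) := by
    ext a
    simp only [Set.mem_setOf_eq, Set.mem_insert_iff, Polynomial.mem_rootSet_of_ne hGne, haeval]
    constructor
    · rintro ⟨ht1, ht2⟩
      by_cases ha : a = 0
      · exact Or.inl ha
      · refine Or.inr (hBez a ?_ ?_)
        · rw [hPeval]; exact (htr0 a).mp ht1
        · rw [hQrel a ha]; exact (htr0 a⁻¹).mp ht2
    · rintro (rfl | hroot)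
      · constructor
        · rw [htr0]; norm_num
        · rw [inv_zero, htr0]; norm_num
      · have ha : a ≠ 0 := fun h => hG0 (h ▸ hroot)
        obtain ⟨c, hc⟩ := hGP
        obtain ⟨c', hc'⟩ := hGQ
        constructor
        · rw [htr0, ← hPeval, hc, Polynomial.eval_mul, hroot, zero_mul]
        · rw [htr0, ← hQrel a ha, hc', Polynomial.eval_mul, hroot, zero_mul]
  -- final count
  have : Nat.card {a : K // Algebra.trace F4 K a = 0 ∧ Algebra.trace F4 K a⁻¹ = 0} =
      Nat.card ↥{a : K | Algebra.trace F4 K a = 0 ∧ Algebra.trace F4 K a⁻¹ = 0} := rfl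
  rw [this, hSet, Nat.card_coe_set_eq,
    Set.ncard_insert_of_notMem (fun h => ?h0) (Set.toFinite _), ← Nat.card_coe_set_eq,
    Nat.card_eq_fintype_card, hGroot]
  case h0 =>
    rw [Polynomial.mem_rootSet_of_ne hGne, haeval] at h
    exact hG0 h
end
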